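/- arXiv:1205.0669 — 6 statements merged into one kernel-verified Lean document; each statement's English description precedes it below -/
import Mathlib

section
/- In the setup below, let w ≠ 0 be a weight of O_x and n ∈ ℤ. Then w + mn is also a weight of O_x, and A_{w+mn} = tⁿ·A_w (the image of A_w under multiplication by tⁿ in the R-module A). -/
open LaurentPolynomial TensorProduct

noncomputable section

/-- The weight space `A_w = {y ∈ A | O_x(y) = w • y}` of the operator `O_x` induced on `A`
by `ad(x)` (the bracket `⁅x, ℓ y⁆` equals `w • ℓ y` modulo the centre `k•c`). -/
def weightSubmodule {k A Lhat : Type} [Field k] [AddCommGroup A] [Module k A]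
    [LieRing Lhat] [LieAlgebra k Lhat]
    (ℓ : A →ₗ[k] Lhat) (x c : Lhat) (w : k) : Submodule k A where
  carrier := {y | ∃ μ : k, ⁅x, ℓ y⁆ = w • ℓ y + μ • c}
  add_mem' := by
    rintro a b ⟨μa, ha⟩ ⟨μb, hb⟩
    exact ⟨μa + μb, by rw [map_add, lie_add, ha, hb]; module⟩
  zero_mem' := ⟨0, by simp⟩
  smul_mem' := by
    rintro t a ⟨μ, h⟩
    exact ⟨t * μ, by rw [map_smul, lie_smul, h]; module⟩

/-- Multiplication by `tⁿ` (with `t = LaurentPolynomial.T 1`) on an `R`-module `A`,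
`R = k[t^{±1}]`, as a `k`-linear map. -/
def tMul (k A : Type) [Field k] [AddCommGroup A] [Module (LaurentPolynomial k) A]
    [Module k A] [IsScalarTower k (LaurentPolynomial k) A] (n : ℤ) : A →ₗ[k] A where
  toFun a := (LaurentPolynomial.T n : LaurentPolynomial k) • a
  map_add' a b := smul_add _ a b
  map_smul' t a := by
    simp only [RingHom.id_apply]
    rw [← algebraMap_smul (LaurentPolynomial k) t a,
      ← algebraMap_smul (LaurentPolynomial k) t
        ((LaurentPolynomial.T n : LaurentPolynomial k) • a),
      smul_smul, smul_smul, mul_comm]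


private lemma fsum_lie_aux {L : Type*} [LieRing L] {ι' : Type*} (s : Finset ι') (F : ι' → L)
    (z : L) : ⁅∑ i ∈ s, F i, z⁆ = ∑ i ∈ s, ⁅F i, z⁆ := by
  induction s using Finset.cons_induction with
  | empty => simp
  | cons a s ha ih => simp [Finset.sum_cons, ih, add_lie]

private lemma lie_fsum_aux {L : Type*} [LieRing L] {ι' : Type*} (s : Finset ι') (F : ι' → L)
    (z : L) : ⁅z, ∑ i ∈ s, F i⁆ = ∑ i ∈ s, ⁅z, F i⁆ := by
  induction s using Finset.cons_induction with
  | empty => simp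
  | cons a s ha ih => simp [Finset.sum_cons, ih, lie_add]

private lemma smul_comm_aux {k : Type} [Field k] {M : Type} [AddCommMonoid M]
    [Module (LaurentPolynomial k) M] [Module k M] [IsScalarTower k (LaurentPolynomial k) M]
    (r : LaurentPolynomial k) (a : k) (v : M) : r • (a • v) = a • (r • v) := by
  rw [← algebraMap_smul (LaurentPolynomial k) a v,
    ← algebraMap_smul (LaurentPolynomial k) a (r • v), smul_smul, smul_smul, mul_comm]

/-- If `w ≠ 0` is a weight of `O_x` and `n ∈ ℤ`, then `w + mn` is a
weight of `O_x` and `A_{w+mn} = tⁿ • A_w`. -/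
theorem weight_space_shift
    -- the base field
    (k : Type) [Field k] [IsAlgClosed k] [CharZero k]
    -- the simple finite-dimensional Lie algebra 𝔤
    (𝔤 : Type) [LieRing 𝔤] [LieAlgebra k 𝔤] [FiniteDimensional k 𝔤]
    [LieAlgebra.IsSimple k 𝔤]
    -- the order m of σ and a primitive m-th root of unity ζ
    (m : ℕ) (hm : 0 < m)
    (σ : 𝔤 ≃ₗ⁅k⁆ 𝔤) (hσ : ∀ y : 𝔤, (⇑σ)^[m] y = y)
    (ζ : k) (hζ : IsPrimitiveRoot ζ m)
    -- the twisted loop algebra L(𝔤,σ) = ⊕_{i∈ℤ} 𝔤_ī ⊗ sⁱ, an R-Lie algebra for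
    -- R = k[t^{±1}] = LaurentPolynomial k (with t = sᵐ);
    -- `u p y` represents `y ⊗ sᵖ` for `y ∈ 𝔤_p̄`, i.e. `σ y = ζ^p • y`
    (Lg : Type) [LieRing Lg] [LieAlgebra (LaurentPolynomial k) Lg]
    [LieAlgebra k Lg] [IsScalarTower k (LaurentPolynomial k) Lg]
    (u : ℤ → 𝔤 →ₗ[k] Lg)
    (hu_bracket : ∀ (p q : ℤ) (y z : 𝔤), σ y = ζ ^ p • y → σ z = ζ ^ q • z →
      ⁅u p y, u q z⁆ = u (p + q) ⁅y, z⁆)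
    (hu_t : ∀ (p : ℤ) (y : 𝔤), σ y = ζ ^ p • y →
      (T 1 : LaurentPolynomial k) • u p y = u (p + (m : ℤ)) y)
    (hu_span : ∀ l : Lg, ∃ f : ℤ →₀ 𝔤, (∀ i, σ (f i) = ζ ^ i • f i) ∧
      l = f.sum fun i yi => u i yi)
    (hu_ind : ∀ f : ℤ →₀ 𝔤, (∀ i, σ (f i) = ζ ^ i • f i) →
      (f.sum fun i yi => u i yi) = 0 → f = 0)
    -- the twisted affine Kac–Moody algebra L̂(𝔤,σ) = L(𝔤,σ) ⊕ kc ⊕ kd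
    (Lhat : Type) [LieRing Lhat] [LieAlgebra k Lhat]
    (c d : Lhat) (ι : Lg →ₗ[k] Lhat)
    (hc : ∀ z : Lhat, ⁅c, z⁆ = 0)
    (hd : ∀ (p : ℤ) (y : 𝔤), σ y = ζ ^ p • y →
      ⁅d, ι (u p y)⁆ = (p : k) • ι (u p y))
    (hbr : ∀ (p q : ℤ) (y z : 𝔤), σ y = ζ ^ p • y → σ z = ζ ^ q • z →
      ⁅ι (u p y), ι (u q z)⁆ =
        ι (u (p + q) ⁅y, z⁆) +
          (if p + q = 0 then (p : k) * killingForm k 𝔤 y z else 0) • c)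
    (hdec : ∀ z : Lhat, ∃ (l : Lg) (a b : k), z = ι l + a • c + b • d)
    (huniq : ∀ (l : Lg) (a b : k), ι l + a • c + b • d = 0 → l = 0 ∧ a = 0 ∧ b = 0)
    -- the invariant nondegenerate bilinear form (·,·) on L̂(𝔤,σ)
    (B : LinearMap.BilinForm k Lhat)
    (hBsymm : ∀ z w : Lhat, B z w = B w z)
    (hBinv : ∀ z w y : Lhat, B ⁅z, w⁆ y = B z ⁅w, y⁆)
    (hBval : ∀ (p q : ℤ) (y z : 𝔤), σ y = ζ ^ p • y → σ z = ζ ^ q • z →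
      B (ι (u p y)) (ι (u q z)) = if p + q = 0 then killingForm k 𝔤 y z else 0)
    (hBc : ∀ l : Lg, B c (ι l) = 0) (hBd : ∀ l : Lg, B d (ι l) = 0)
    (hBcc : B c c = 0) (hBdd : B d d = 0) (hBcd : B c d = 1)
    -- the R-Lie subalgebra A of L(𝔤,σ), free of finite rank over R,
    -- with A ⊗_R K semisimple over the fraction field K of R
    (A : Type) [LieRing A] [LieAlgebra (LaurentPolynomial k) A]
    [Module k A] [IsScalarTower k (LaurentPolynomial k) A]
    [Module.Free (LaurentPolynomial k) A] [Module.Finite (LaurentPolynomial k) A]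
    (hss : LieAlgebra.IsSemisimple (FractionRing (LaurentPolynomial k))
      (FractionRing (LaurentPolynomial k) ⊗[LaurentPolynomial k] A))
    (j : A →ₗ⁅LaurentPolynomial k⁆ Lg) (hj : Function.Injective j)
    -- the embedding ℓ = ι ∘ j of A into L̂(𝔤,σ)
    (ℓ : A →ₗ[k] Lhat) (hℓ : ∀ a : A, ℓ a = ι (j a))
    -- Â = A ⊕ kc ⊕ kd, a subalgebra of L̂(𝔤,σ) on which the form is nondegenerate
    (Ahat : Submodule k Lhat)
    (hAhat : Ahat = LinearMap.range ℓ ⊔ Submodule.span k {c} ⊔ Submodule.span k {d})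
    (hA_closed : ∀ z ∈ Ahat, ∀ w ∈ Ahat, ⁅z, w⁆ ∈ Ahat)
    (hBnd : ∀ z ∈ Ahat, (∀ w ∈ Ahat, B z w = 0) → z = 0)
    -- the element x = x' + d with 0 ≠ x' ∈ A, with ad(x) k-diagonalizable on Â
    (x' : A) (hx'0 : x' ≠ 0) (x : Lhat) (hx : x = ℓ x' + d)
    (hdiag : ∀ z ∈ Ahat, z ∈ ⨆ w : k,
      Ahat ⊓ Module.End.eigenspace (LieAlgebra.ad k Lhat x) w)
    -- a nonzero weight w of O_x, and an integer n
    (w : k) (hw : w ≠ 0) (hwweight : weightSubmodule ℓ x c w ≠ ⊥) (n : ℤ) :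
    weightSubmodule ℓ x c (w + (((m : ℤ) * n : ℤ) : k)) ≠ ⊥ ∧
    weightSubmodule ℓ x c (w + (((m : ℤ) * n : ℤ) : k)) =
      Submodule.map (tMul k A n) (weightSubmodule ℓ x c w) := by

  classical
  -- ζ facts
  have hζ0 : ζ ≠ 0 := hζ.ne_zero hm.ne'
  have hζm : ζ ^ (m : ℤ) = 1 := by rw [zpow_natCast, hζ.pow_eq_one]
  have hζshift : ∀ p q : ℤ, ζ ^ (p + (m : ℤ) * q) = ζ ^ p := by
    intro p q
    rw [zpow_add₀ hζ0, zpow_mul, hζm, one_zpow, mul_one]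
  -- the action of T on the graded pieces
  have hT1 : ∀ (p : ℤ) (y : 𝔤), σ y = ζ ^ p • y →
      (T (-1 : ℤ) : LaurentPolynomial k) • u p y = u (p - (m : ℤ)) y := by
    intro p y hy
    have hy' : σ y = ζ ^ (p - (m : ℤ)) • y := by
      rw [hy]; congr 1
      have := hζshift (p - (m : ℤ)) 1
      rw [mul_one, sub_add_cancel] at this
      rw [this]
    have h2 : (T (1 : ℤ) : LaurentPolynomial k) • u (p - (m : ℤ)) y = u p y := by
      have := hu_t (p - (m : ℤ)) y hy'
      rwa [sub_add_cancel] at this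
    calc (T (-1 : ℤ) : LaurentPolynomial k) • u p y
        = (T (-1 : ℤ) : LaurentPolynomial k) •
            ((T (1 : ℤ) : LaurentPolynomial k) • u (p - (m : ℤ)) y) := by rw [h2]
      _ = ((T (-1 : ℤ) * T (1 : ℤ) : LaurentPolynomial k)) • u (p - (m : ℤ)) y :=
          (mul_smul _ _ _).symm
      _ = u (p - (m : ℤ)) y := by rw [← T_add]; norm_num
  have hT : ∀ (q p : ℤ) (y : 𝔤), σ y = ζ ^ p • y →
      (T q : LaurentPolynomial k) • u p y = u (p + (m : ℤ) * q) y := by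
    intro q
    induction q using Int.induction_on with
    | zero => intro p y hy; simp
    | succ nq ih =>
        intro p y hy
        have hy' : σ y = ζ ^ (p + (m : ℤ) * (nq : ℤ)) • y := by rw [hζshift]; exact hy
        have h1 := hu_t (p + (m : ℤ) * (nq : ℤ)) y hy'
        calc (T ((nq : ℤ) + 1) : LaurentPolynomial k) • u p y
            = (T (1 : ℤ) : LaurentPolynomial k) •
                ((T (nq : ℤ) : LaurentPolynomial k) • u p y) := by
              rw [← mul_smul, ← T_add]; ring_nf
          _ = u (p + (m : ℤ) * ((nq : ℤ) + 1)) y := by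
              rw [ih p y hy, h1]; congr 1; ring
    | pred nq ih =>
        intro p y hy
        have hy' : σ y = ζ ^ (p + (m : ℤ) * (-(nq : ℤ))) • y := by rw [hζshift]; exact hy
        have h1 := hT1 (p + (m : ℤ) * (-(nq : ℤ))) y hy'
        calc (T (-(nq : ℤ) - 1) : LaurentPolynomial k) • u p y
            = (T (-1 : ℤ) : LaurentPolynomial k) •
                ((T (-(nq : ℤ)) : LaurentPolynomial k) • u p y) := by
              rw [← mul_smul, ← T_add]; ring_nf
          _ = u (p + (m : ℤ) * (-(nq : ℤ) - 1)) y := by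
              rw [ih p y hy, h1]; congr 1; ring
  -- injectivity modulo the centre
  have hι_inj : ∀ (l l' : Lg) (μ ν : k), ι l + μ • c = ι l' + ν • c → l = l' := by
    intro l l' μ ν h
    have h2 : ι (l - l') + (μ - ν) • c + (0 : k) • d = 0 := by
      rw [map_sub, sub_smul, zero_smul, add_zero]
      have h3 := sub_eq_zero_of_eq h
      abel_nf at h3 ⊢
      exact h3
    exact sub_eq_zero.mp (huniq _ _ _ h2).1
  -- bracket of images of ι: ι is a homomorphism modulo the centre
  have hM : ∀ b : Lg, ∃ μ₀ : k, ⁅ι (j x'), ι b⁆ = ι ⁅j x', b⁆ + μ₀ • c := by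
    intro b
    obtain ⟨g, hg, hga⟩ := hu_span (j x')
    obtain ⟨f, hf, hfb⟩ := hu_span b
    refine ⟨∑ p ∈ g.support, ∑ q ∈ f.support,
      (if p + q = 0 then (p : k) * killingForm k 𝔤 (g p) (f q) else 0), ?_⟩
    rw [hga, hfb, Finsupp.sum, Finsupp.sum]
    rw [map_sum, map_sum, fsum_lie_aux]
    have hterm : ∀ p ∈ g.support,
        ⁅ι (u p (g p)), ∑ q ∈ f.support, ι (u q (f q))⁆
          = (∑ q ∈ f.support, ι (u (p + q) ⁅g p, f q⁆)) +
            (∑ q ∈ f.support,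
              (if p + q = 0 then (p : k) * killingForm k 𝔤 (g p) (f q) else 0)) • c := by
      intro p _
      rw [lie_fsum_aux,
        Finset.sum_congr rfl fun q _ => hbr p q (g p) (f q) (hg p) (hf q),
        Finset.sum_add_distrib, Finset.sum_smul]
    rw [Finset.sum_congr rfl hterm, Finset.sum_add_distrib, ← Finset.sum_smul]
    congr 1
    rw [fsum_lie_aux, map_sum]
    refine Finset.sum_congr rfl fun p _ => ?_
    rw [lie_fsum_aux, map_sum]
    exact Finset.sum_congr rfl fun q _ => by
      rw [hu_bracket p q (g p) (f q) (hg p) (hf q)]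
  -- the action of d, and its interplay with multiplication by T n
  have hD : ∀ y : A, ∃ Db : Lg, ⁅d, ι (j y)⁆ = ι Db ∧
      ∀ nn : ℤ, ⁅d, ι (j ((T nn : LaurentPolynomial k) • y))⁆ =
        ι ((T nn : LaurentPolynomial k) • Db) +
          ((m : k) * (nn : k)) • ι (j ((T nn : LaurentPolynomial k) • y)) := by
    intro y
    obtain ⟨f, hf, hfb⟩ := hu_span (j y)
    refine ⟨f.sum fun i yi => (i : k) • u i yi, ?_, ?_⟩
    · rw [hfb, Finsupp.sum, Finsupp.sum, map_sum, lie_fsum_aux, map_sum]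
      refine Finset.sum_congr rfl fun i _ => ?_
      rw [map_smul, hd i (f i) (hf i)]
    · intro nn
      have hjy : j ((T nn : LaurentPolynomial k) • y)
          = ∑ i ∈ f.support, u (i + (m : ℤ) * nn) (f i) := by
        rw [map_smul j, hfb, Finsupp.sum, Finset.smul_sum]
        exact Finset.sum_congr rfl fun i _ => hT nn i (f i) (hf i)
      have hTDb : (T nn : LaurentPolynomial k) • (f.sum fun i yi => (i : k) • u i yi)
          = ∑ i ∈ f.support, (i : k) • u (i + (m : ℤ) * nn) (f i) := by
        rw [Finsupp.sum, Finset.smul_sum]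
        refine Finset.sum_congr rfl fun i _ => ?_
        rw [smul_comm_aux, hT nn i (f i) (hf i)]
      rw [hjy, hTDb, map_sum, lie_fsum_aux, map_sum, Finset.smul_sum,
        ← Finset.sum_add_distrib]
      refine Finset.sum_congr rfl fun i _ => ?_
      have heig : σ (f i) = ζ ^ (i + (m : ℤ) * nn) • f i := by rw [hζshift]; exact hf i
      rw [hd (i + (m : ℤ) * nn) (f i) heig, map_smul]
      push_cast
      rw [add_smul]
  -- the key computation
  have star : ∀ (y z : A) (μ : k), ⁅x, ℓ y⁆ = ℓ z + μ • c →
      ∀ nn : ℤ, ∃ μ' : k, ⁅x, ℓ ((T nn : LaurentPolynomial k) • y)⁆ =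
        ℓ ((T nn : LaurentPolynomial k) • z) +
          ((m : k) * (nn : k)) • ℓ ((T nn : LaurentPolynomial k) • y) + μ' • c := by
    intro y z μ hyz nn
    obtain ⟨Db, hDb1, hDb2⟩ := hD y
    obtain ⟨μ₀, hμ₀⟩ := hM (j y)
    obtain ⟨μ₁, hμ₁⟩ := hM (j ((T nn : LaurentPolynomial k) • y))
    have hxy : ⁅x, ℓ y⁆ = ι (⁅j x', j y⁆ + Db) + μ₀ • c := by
      rw [hx, add_lie, hℓ x', hℓ y, hμ₀, hDb1, map_add]
      abel
    have hz : ⁅j x', j y⁆ + Db = j z := by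
      apply hι_inj _ _ μ₀ μ
      rw [← hxy, hyz, hℓ z]
    refine ⟨μ₁, ?_⟩
    have key : ⁅x, ℓ ((T nn : LaurentPolynomial k) • y)⁆ =
        ι ⁅j x', j ((T nn : LaurentPolynomial k) • y)⁆ + μ₁ • c +
          (ι ((T nn : LaurentPolynomial k) • Db) +
            ((m : k) * (nn : k)) • ι (j ((T nn : LaurentPolynomial k) • y))) := by
      rw [hx, add_lie, hℓ x', hℓ ((T nn : LaurentPolynomial k) • y), hμ₁, hDb2 nn]
    have h2 : ⁅j x', j ((T nn : LaurentPolynomial k) • y)⁆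
        = (T nn : LaurentPolynomial k) • ⁅j x', j y⁆ := by
      rw [map_smul j, lie_smul]
    have h3 : ι ⁅j x', j ((T nn : LaurentPolynomial k) • y)⁆ +
        ι ((T nn : LaurentPolynomial k) • Db) = ℓ ((T nn : LaurentPolynomial k) • z) := by
      rw [h2, ← map_add, ← smul_add, hz, hℓ, map_smul j]
    rw [key, hℓ ((T nn : LaurentPolynomial k) • y), ← h3]
    abel
  -- the weight-shift step
  have step : ∀ (w' : k) (nn : ℤ) (y : A), y ∈ weightSubmodule ℓ x c w' →
      (T nn : LaurentPolynomial k) • y ∈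
        weightSubmodule ℓ x c (w' + (m : k) * (nn : k)) := by
    intro w' nn y hy
    obtain ⟨μ, hμ⟩ := hy
    have hμ' : ⁅x, ℓ y⁆ = ℓ (w' • y) + μ • c := by rw [map_smul]; exact hμ
    obtain ⟨μ', h'⟩ := star y (w' • y) μ hμ' nn
    refine ⟨μ', ?_⟩
    rw [h', smul_comm_aux, map_smul, add_smul]
  have hTT : ∀ (nn : ℤ) (y : A),
      (T nn : LaurentPolynomial k) • (T (-nn) : LaurentPolynomial k) • y = y := by
    intro nn y
    rw [← mul_smul, ← T_add]
    simp
  have hcast : (((m : ℤ) * n : ℤ) : k) = (m : k) * (n : k) := by push_cast; ring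
  constructor
  · rw [Submodule.ne_bot_iff] at hwweight ⊢
    obtain ⟨y, hy, hy0⟩ := hwweight
    refine ⟨(T n : LaurentPolynomial k) • y, ?_, ?_⟩
    · rw [hcast]; exact step w n y hy
    · intro h0
      apply hy0
      have h4 := hTT (-n) y
      rw [neg_neg] at h4
      rw [← h4, h0, smul_zero]
  · apply le_antisymm
    · intro z hz
      rw [Submodule.mem_map]
      refine ⟨(T (-n) : LaurentPolynomial k) • z, ?_, hTT n z⟩
      have hsc : w + (((m : ℤ) * n : ℤ) : k) + (m : k) * ((-n : ℤ) : k) = w := by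
        push_cast; ring
      rw [← hsc]
      exact step (w + (((m : ℤ) * n : ℤ) : k)) (-n) z hz
    · rintro _ ⟨y, hy, rfl⟩
      show (T n : LaurentPolynomial k) • y ∈ _
      rw [hcast]
      exact step w n y hy
end
end

section
/- In the setup below, let w be a weight of O_x. Then the R-span A_w·R of A_w in A equals the direct sum ⊕_{n∈ℤ} A_{w+mn}, and the k-linear map ν: A_w ⊗_k R → A_w·R given by y ⊗ tⁿ ↦ y·tⁿ is bijective. -/
open LaurentPolynomial TensorProduct

noncomputable section

/-- For a `k`-subspace `W` of an `R`-module `A` (`R = k[t^{±1}]`), the natural map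
`ν : W ⊗_k R → A`, `y ⊗ r ↦ r • y`. -/
def nuMap (k A : Type) [Field k] [AddCommGroup A] [Module (LaurentPolynomial k) A]
    [Module k A] [IsScalarTower k (LaurentPolynomial k) A] (W : Submodule k A) :
    (W ⊗[k] LaurentPolynomial k) →ₗ[k] A :=
  TensorProduct.lift
    { toFun := fun y =>
        { toFun := fun r => r • (y : A)
          map_add' := fun r s => add_smul r s (y : A)
          map_smul' := fun t r => by
            simp only [RingHom.id_apply]
            rw [smul_assoc] }
      map_add' := fun y z => LinearMap.ext fun r => by
        simp only [LinearMap.coe_mk, AddHom.coe_mk, LinearMap.add_apply,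
          Submodule.coe_add]
        rw [smul_add]
      map_smul' := fun t y => LinearMap.ext fun r => by
        simp only [RingHom.id_apply, LinearMap.coe_mk, AddHom.coe_mk,
          LinearMap.smul_apply, SetLike.val_smul]
        rw [← algebraMap_smul (LaurentPolynomial k) t (y : A), smul_smul, mul_comm,
          ← smul_smul, algebraMap_smul] }

private lemma lie_sum' {L : Type*} [LieRing L] {ι : Type*} (s : Finset ι) (x : L) (f : ι → L) :
    ⁅x, ∑ i ∈ s, f i⁆ = ∑ i ∈ s, ⁅x, f i⁆ :=
  map_sum (AddMonoidHom.mk' (fun z : L => ⁅x, z⁆) fun a b => lie_add x a b) f s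

private lemma sum_lie' {L : Type*} [LieRing L] {ι : Type*} (s : Finset ι) (y : L) (f : ι → L) :
    ⁅∑ i ∈ s, f i, y⁆ = ∑ i ∈ s, ⁅f i, y⁆ :=
  map_sum (AddMonoidHom.mk' (fun z : L => ⁅z, y⁆) fun a b => add_lie a b y) f s

set_option maxHeartbeats 1600000 in
/-- For a weight `w` of `O_x`, the `R`-span `A_w·R` of `A_w` in `A` is
the direct sum `⊕_{n∈ℤ} A_{w+mn}`, and `ν : A_w ⊗_k R → A_w·R`, `y ⊗ tⁿ ↦ y·tⁿ`,
is bijective. -/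
theorem span_of_weight_space
    -- the base field
    (k : Type) [Field k] [IsAlgClosed k] [CharZero k]
    -- the simple finite-dimensional Lie algebra 𝔤
    (𝔤 : Type) [LieRing 𝔤] [LieAlgebra k 𝔤] [FiniteDimensional k 𝔤]
    [LieAlgebra.IsSimple k 𝔤]
    -- the order m of σ and a primitive m-th root of unity ζ
    (m : ℕ) (hm : 0 < m)
    (σ : 𝔤 ≃ₗ⁅k⁆ 𝔤) (hσ : ∀ y : 𝔤, (⇑σ)^[m] y = y)
    (ζ : k) (hζ : IsPrimitiveRoot ζ m)
    -- the twisted loop algebra L(𝔤,σ) = ⊕_{i∈ℤ} 𝔤_ī ⊗ sⁱ, an R-Lie algebra for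
    -- R = k[t^{±1}] = LaurentPolynomial k (with t = sᵐ);
    -- `u p y` represents `y ⊗ sᵖ` for `y ∈ 𝔤_p̄`, i.e. `σ y = ζ^p • y`
    (Lg : Type) [LieRing Lg] [LieAlgebra (LaurentPolynomial k) Lg]
    [LieAlgebra k Lg] [IsScalarTower k (LaurentPolynomial k) Lg]
    (u : ℤ → 𝔤 →ₗ[k] Lg)
    (hu_bracket : ∀ (p q : ℤ) (y z : 𝔤), σ y = ζ ^ p • y → σ z = ζ ^ q • z →
      ⁅u p y, u q z⁆ = u (p + q) ⁅y, z⁆)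
    (hu_t : ∀ (p : ℤ) (y : 𝔤), σ y = ζ ^ p • y →
      (T 1 : LaurentPolynomial k) • u p y = u (p + (m : ℤ)) y)
    (hu_span : ∀ l : Lg, ∃ f : ℤ →₀ 𝔤, (∀ i, σ (f i) = ζ ^ i • f i) ∧
      l = f.sum fun i yi => u i yi)
    (hu_ind : ∀ f : ℤ →₀ 𝔤, (∀ i, σ (f i) = ζ ^ i • f i) →
      (f.sum fun i yi => u i yi) = 0 → f = 0)
    -- the twisted affine Kac–Moody algebra L̂(𝔤,σ) = L(𝔤,σ) ⊕ kc ⊕ kd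
    (Lhat : Type) [LieRing Lhat] [LieAlgebra k Lhat]
    (c d : Lhat) (ι : Lg →ₗ[k] Lhat)
    (hc : ∀ z : Lhat, ⁅c, z⁆ = 0)
    (hd : ∀ (p : ℤ) (y : 𝔤), σ y = ζ ^ p • y →
      ⁅d, ι (u p y)⁆ = (p : k) • ι (u p y))
    (hbr : ∀ (p q : ℤ) (y z : 𝔤), σ y = ζ ^ p • y → σ z = ζ ^ q • z →
      ⁅ι (u p y), ι (u q z)⁆ =
        ι (u (p + q) ⁅y, z⁆) +
          (if p + q = 0 then (p : k) * killingForm k 𝔤 y z else 0) • c)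
    (hdec : ∀ z : Lhat, ∃ (l : Lg) (a b : k), z = ι l + a • c + b • d)
    (huniq : ∀ (l : Lg) (a b : k), ι l + a • c + b • d = 0 → l = 0 ∧ a = 0 ∧ b = 0)
    -- the invariant nondegenerate bilinear form (·,·) on L̂(𝔤,σ)
    (B : LinearMap.BilinForm k Lhat)
    (hBsymm : ∀ z w : Lhat, B z w = B w z)
    (hBinv : ∀ z w y : Lhat, B ⁅z, w⁆ y = B z ⁅w, y⁆)
    (hBval : ∀ (p q : ℤ) (y z : 𝔤), σ y = ζ ^ p • y → σ z = ζ ^ q • z →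
      B (ι (u p y)) (ι (u q z)) = if p + q = 0 then killingForm k 𝔤 y z else 0)
    (hBc : ∀ l : Lg, B c (ι l) = 0) (hBd : ∀ l : Lg, B d (ι l) = 0)
    (hBcc : B c c = 0) (hBdd : B d d = 0) (hBcd : B c d = 1)
    -- the R-Lie subalgebra A of L(𝔤,σ), free of finite rank over R,
    -- with A ⊗_R K semisimple over the fraction field K of R
    (A : Type) [LieRing A] [LieAlgebra (LaurentPolynomial k) A]
    [Module k A] [IsScalarTower k (LaurentPolynomial k) A]
    [Module.Free (LaurentPolynomial k) A] [Module.Finite (LaurentPolynomial k) A]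
    (hss : LieAlgebra.IsSemisimple (FractionRing (LaurentPolynomial k))
      (FractionRing (LaurentPolynomial k) ⊗[LaurentPolynomial k] A))
    (j : A →ₗ⁅LaurentPolynomial k⁆ Lg) (hj : Function.Injective j)
    -- the embedding ℓ = ι ∘ j of A into L̂(𝔤,σ)
    (ℓ : A →ₗ[k] Lhat) (hℓ : ∀ a : A, ℓ a = ι (j a))
    -- Â = A ⊕ kc ⊕ kd, a subalgebra of L̂(𝔤,σ) on which the form is nondegenerate
    (Ahat : Submodule k Lhat)
    (hAhat : Ahat = LinearMap.range ℓ ⊔ Submodule.span k {c} ⊔ Submodule.span k {d})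
    (hA_closed : ∀ z ∈ Ahat, ∀ w ∈ Ahat, ⁅z, w⁆ ∈ Ahat)
    (hBnd : ∀ z ∈ Ahat, (∀ w ∈ Ahat, B z w = 0) → z = 0)
    -- the element x = x' + d with 0 ≠ x' ∈ A, with ad(x) k-diagonalizable on Â
    (x' : A) (hx'0 : x' ≠ 0) (x : Lhat) (hx : x = ℓ x' + d)
    (hdiag : ∀ z ∈ Ahat, z ∈ ⨆ w : k,
      Ahat ⊓ Module.End.eigenspace (LieAlgebra.ad k Lhat x) w)
    -- a weight w of O_x
    (w : k) (hwweight : weightSubmodule ℓ x c w ≠ ⊥) :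
    iSupIndep (fun n : ℤ =>
      weightSubmodule ℓ x c (w + (((m : ℤ) * n : ℤ) : k))) ∧
    (Submodule.span (LaurentPolynomial k)
        ((weightSubmodule ℓ x c w : Set A))).restrictScalars k =
      (⨆ n : ℤ, weightSubmodule ℓ x c (w + (((m : ℤ) * n : ℤ) : k))) ∧
    Function.Injective (nuMap k A (weightSubmodule ℓ x c w)) ∧
    LinearMap.range (nuMap k A (weightSubmodule ℓ x c w)) =
      (Submodule.span (LaurentPolynomial k)
        ((weightSubmodule ℓ x c w : Set A))).restrictScalars k := by
  have hm0 : ((m : ℤ)) ≠ 0 := by exact_mod_cast hm.ne'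
  have hζ0 : ζ ≠ 0 := hζ.ne_zero hm.ne'
  have hζm : ζ ^ (m : ℤ) = 1 := by rw [zpow_natCast]; exact hζ.pow_eq_one
  have hσshift : ∀ (p n : ℤ) (y : 𝔤), σ y = ζ ^ p • y → σ y = ζ ^ (p + (m : ℤ) * n) • y := by
    intro p n y h
    have h1 : ζ ^ (p + (m : ℤ) * n) = ζ ^ p := by
      rw [zpow_add₀ hζ0, zpow_mul, hζm, one_zpow, mul_one]
    rw [h1]; exact h
  -- `T n • u p y = u (p + m*n) y` for all `n : ℤ`
  have hTpow : ∀ (n p : ℤ) (y : 𝔤), σ y = ζ ^ p • y →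
      (T n : LaurentPolynomial k) • u p y = u (p + (m : ℤ) * n) y := by
    intro n
    induction n using Int.induction_on with
    | zero => intro p y h; simp [T_zero]
    | succ n ih =>
      intro p y h
      have h1 : (T ((n : ℤ) + 1) : LaurentPolynomial k) = T 1 * T n := by
        rw [← T_add]; ring_nf
      rw [h1, mul_smul, ih p y h, hu_t _ _ (hσshift p n y h)]
      congr 1
      ring
    | pred n ih =>
      intro p y h
      have h1 : (T (-(n : ℤ) - 1) : LaurentPolynomial k) = T (-1) * T (-n) := by
        rw [← T_add]; ring_nf
      have hq : σ y = ζ ^ (p + (m : ℤ) * (-(n : ℤ) - 1)) • y := hσshift p _ y h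
      have h2 : (T 1 : LaurentPolynomial k) • u (p + (m : ℤ) * (-(n : ℤ) - 1)) y
          = u (p + (m : ℤ) * (-(n : ℤ))) y := by
        rw [hu_t _ _ hq]
        congr 1
        ring
      rw [h1, mul_smul, ih p y h, ← h2, ← mul_smul, ← T_add]
      norm_num [T_zero]
  -- the key structural computation of `⁅x, ι l⁆`
  obtain ⟨g, hg, hgx⟩ := hu_span (j x')
  have hgen : ∀ (p : ℤ) (z : 𝔤), σ z = ζ ^ p • z →
      ⁅x, ι (u p z)⁆ = ι ⁅j x', u p z⁆ + (p : k) • ι (u p z) +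
        (∑ q ∈ g.support, if q + p = 0 then (q : k) * killingForm k 𝔤 (g q) z else 0) • c := by
    intro p z hz
    have hjx : ⁅(ι (j x') : Lhat), ι (u p z)⁆ = ι ⁅j x', u p z⁆ +
        (∑ q ∈ g.support, if q + p = 0 then (q : k) * killingForm k 𝔤 (g q) z else 0) • c := by
      have e1 : ⁅(ι (j x') : Lhat), ι (u p z)⁆
          = ∑ q ∈ g.support, ⁅(ι (u q (g q)) : Lhat), ι (u p z)⁆ := by
        conv_lhs => rw [hgx, Finsupp.sum]
        rw [map_sum, sum_lie']
      rw [e1, Finset.sum_congr rfl fun q _ => hbr q p (g q) z (hg q) hz,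
        Finset.sum_add_distrib, ← Finset.sum_smul]
      congr 1
      rw [← map_sum]
      congr 1
      conv_rhs => rw [hgx, Finsupp.sum]
      rw [sum_lie']
      exact Finset.sum_congr rfl fun q _ => (hu_bracket q p (g q) z (hg q) hz).symm
    rw [hx, hℓ, add_lie, hjx, hd p z hz]
    abel
  have hKEY : ∀ (f : ℤ →₀ 𝔤), (∀ i, σ (f i) = ζ ^ i • f i) →
      ∃ κ : k, ⁅x, ι (f.sum fun i yi => u i yi)⁆ =
        ι (⁅j x', f.sum fun i yi => u i yi⁆ + f.sum fun i yi => (i : k) • u i yi) + κ • c := by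
    intro f hf
    refine ⟨∑ i ∈ f.support, ∑ q ∈ g.support,
      (if q + i = 0 then (q : k) * killingForm k 𝔤 (g q) (f i) else 0), ?_⟩
    simp only [Finsupp.sum]
    rw [map_sum, lie_sum', Finset.sum_congr rfl fun i _ => hgen i (f i) (hf i),
      Finset.sum_add_distrib, Finset.sum_add_distrib, ← Finset.sum_smul,
      map_add, lie_sum', map_sum, map_sum]
    simp only [map_smul]
  -- CORE: multiplication by `T n` shifts weights by `m * n`
  have hCORE : ∀ (n : ℤ) (l : Lg) (v μ : k), ⁅x, ι l⁆ = v • ι l + μ • c →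
      ∃ μ' : k, ⁅x, ι ((T n : LaurentPolynomial k) • l)⁆ =
        (v + (((m : ℤ) * n : ℤ) : k)) • ι ((T n : LaurentPolynomial k) • l) + μ' • c := by
    intro n l v μ hl
    obtain ⟨f, hf, hlf⟩ := hu_span l
    obtain ⟨κ, hκ⟩ := hKEY f hf
    rw [← hlf] at hκ
    have hmain : ⁅j x', l⁆ + (f.sum fun i yi => (i : k) • u i yi) = v • l := by
      have heq : ι (⁅j x', l⁆ + f.sum fun i yi => (i : k) • u i yi) + κ • c
          = v • ι l + μ • c := hκ.symm.trans hl
      have h0 : ι ((⁅j x', l⁆ + f.sum fun i yi => (i : k) • u i yi) - v • l)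
          + (κ - μ) • c + (0 : k) • d = 0 := by
        rw [zero_smul, add_zero, map_sub, map_smul, sub_smul, eq_sub_of_add_eq heq]
        abel
      have := (huniq _ _ _ h0).1
      exact sub_eq_zero.mp this
    -- the shifted decomposition
    have hφinj : Function.Injective (fun i : ℤ => i + (m : ℤ) * n) := by
      intro a b hab
      simpa using hab
    set f' : ℤ →₀ 𝔤 := f.mapDomain (fun i : ℤ => i + (m : ℤ) * n) with hf'def
    have hf'σ : ∀ i, σ (f' i) = ζ ^ i • f' i := by
      intro i
      by_cases hi : i ∈ Set.range (fun i : ℤ => i + (m : ℤ) * n)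
      · obtain ⟨i0, rfl⟩ := hi
        rw [hf'def, Finsupp.mapDomain_apply hφinj]
        exact hσshift i0 n (f i0) (hf i0)
      · rw [hf'def, Finsupp.mapDomain_notin_range _ _ hi, smul_zero]
        exact σ.toLinearEquiv.map_zero
    have hsum' : (T n : LaurentPolynomial k) • l = f'.sum fun i yi => u i yi := by
      rw [hf'def, Finsupp.sum_mapDomain_index_inj hφinj, hlf, Finsupp.smul_sum]
      exact Finsupp.sum_congr fun i _ => hTpow n i (f i) (hf i)
    obtain ⟨κ', hκ'⟩ := hKEY f' hf'σ
    rw [← hsum'] at hκ'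
    have hD' : (f'.sum fun i yi => (i : k) • u i yi)
        = (T n : LaurentPolynomial k) • (f.sum fun i yi => (i : k) • u i yi)
          + (((m : ℤ) * n : ℤ) : k) • ((T n : LaurentPolynomial k) • l) := by
      rw [hf'def, Finsupp.sum_mapDomain_index_inj hφinj]
      have hterm : ∀ i ∈ f.support, ((i + (m : ℤ) * n : ℤ) : k) • u (i + (m : ℤ) * n) (f i)
          = (T n : LaurentPolynomial k) • ((i : k) • u i (f i))
            + (((m : ℤ) * n : ℤ) : k) • ((T n : LaurentPolynomial k) • u i (f i)) := by
        intro i _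
        rw [← hTpow n i (f i) (hf i), smul_comm ((T n : LaurentPolynomial k)) ((i : k)),
          ← add_smul]
        congr 1
        push_cast
        ring
      rw [Finsupp.sum, Finset.sum_congr rfl hterm, Finset.sum_add_distrib]
      congr 1
      · conv_rhs => rw [Finsupp.smul_sum, Finsupp.sum]
      · conv_rhs => rw [hlf, Finsupp.smul_sum, Finsupp.smul_sum, Finsupp.sum]
    refine ⟨κ', ?_⟩
    rw [hκ', hD', lie_smul]
    congr 1
    rw [← map_smul]
    congr 1
    rw [← add_assoc, ← smul_add, hmain, smul_comm ((T n : LaurentPolynomial k)) v, ← add_smul]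
  -- membership transfer between weight spaces
  have hMEM : ∀ (n : ℤ) (v : k) (y : A), y ∈ weightSubmodule ℓ x c v →
      (T n : LaurentPolynomial k) • y ∈
        weightSubmodule ℓ x c (v + (((m : ℤ) * n : ℤ) : k)) := by
    rintro n v y ⟨μ, hμ⟩
    rw [hℓ] at hμ
    obtain ⟨μ', hμ'⟩ := hCORE n (j y) v μ hμ
    refine ⟨μ', ?_⟩
    rw [hℓ, map_smul]
    exact hμ'
  -- the quotient by `k•c` and the induced operator
  set pC : Submodule k Lhat := Submodule.span k {c} with hpC
  have hxc : ⁅x, c⁆ = 0 := by rw [← lie_skew, hc x, neg_zero]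
  have hstab : pC ≤ pC.comap ((LieAlgebra.ad k Lhat) x) := by
    rw [hpC, Submodule.span_le]
    rintro z rfl
    rw [SetLike.mem_coe, Submodule.mem_comap, LieAlgebra.ad_apply, hxc]
    exact Submodule.zero_mem _
  set O : Module.End k (Lhat ⧸ pC) := Submodule.mapQ pC pC ((LieAlgebra.ad k Lhat) x) hstab
    with hO
  have hOapp : ∀ z : Lhat, O (pC.mkQ z) = pC.mkQ ⁅x, z⁆ := by
    intro z
    rw [hO, Submodule.mkQ_apply, Submodule.mapQ_apply, LieAlgebra.ad_apply, Submodule.mkQ_apply]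
  have hπc : pC.mkQ c = 0 := by
    rw [Submodule.mkQ_apply, Submodule.Quotient.mk_eq_zero]
    exact Submodule.mem_span_singleton_self c
  have hchar : ∀ (v : k) (y : A),
      y ∈ weightSubmodule ℓ x c v ↔ O (pC.mkQ (ℓ y)) = v • pC.mkQ (ℓ y) := by
    intro v y
    constructor
    · rintro ⟨μ, hμ⟩
      rw [hOapp, hμ, map_add, map_smul, map_smul, hπc, smul_zero, add_zero]
    · intro h
      rw [hOapp] at h
      have h2 : pC.mkQ (⁅x, ℓ y⁆ - v • ℓ y) = 0 := by
        rw [map_sub, map_smul, h, sub_self]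
      rw [Submodule.mkQ_apply, Submodule.Quotient.mk_eq_zero] at h2
      obtain ⟨a, ha⟩ := Submodule.mem_span_singleton.mp h2
      exact ⟨a, sub_eq_iff_eq_add'.mp ha.symm⟩
  have hWSeq : ∀ v : k, weightSubmodule ℓ x c v
      = Submodule.comap (pC.mkQ ∘ₗ ℓ) (Module.End.eigenspace O v) := by
    intro v
    ext y
    rw [Submodule.mem_comap, Module.End.mem_eigenspace_iff]
    exact hchar v y
  have hφAinj : Function.Injective (pC.mkQ ∘ₗ ℓ) := by
    intro y z hyz
    have h1 : pC.mkQ (ℓ (y - z)) = 0 := by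
      rw [map_sub, map_sub]
      simpa [sub_eq_zero] using hyz
    rw [Submodule.mkQ_apply, Submodule.Quotient.mk_eq_zero] at h1
    obtain ⟨a, ha⟩ := Submodule.mem_span_singleton.mp h1
    have h2 : ι (j (y - z)) + (-a) • c + (0 : k) • d = 0 := by
      rw [← hℓ, ← ha]
      module
    have h3 := (huniq _ _ _ h2).1
    have h4 : y - z = 0 := by
      apply hj
      rw [h3, map_zero]
    rw [sub_eq_zero] at h4
    exact h4
  -- CONCLUSION 1: independence
  have hψinj : Function.Injective (fun n : ℤ => w + (((m : ℤ) * n : ℤ) : k)) := by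
    intro a b hab
    simp only [add_right_inj] at hab
    have : ((m : ℤ) * a) = ((m : ℤ) * b) := by exact_mod_cast hab
    exact mul_left_cancel₀ hm0 this
  have hEind := (Module.End.eigenspaces_iSupIndep O).comp hψinj
  have hIndep : iSupIndep (fun n : ℤ =>
      weightSubmodule ℓ x c (w + (((m : ℤ) * n : ℤ) : k))) := by
    rw [iSupIndep_def]
    intro n
    rw [disjoint_iff]
    have h2 : (⨆ i, ⨆ (_ : i ≠ n), weightSubmodule ℓ x c (w + (((m : ℤ) * i : ℤ) : k)))
        ≤ Submodule.comap (pC.mkQ ∘ₗ ℓ)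
            (⨆ i, ⨆ (_ : i ≠ n),
              Module.End.eigenspace O (w + (((m : ℤ) * i : ℤ) : k))) := by
      refine iSup₂_le fun i hi => ?_
      rw [hWSeq]
      exact Submodule.comap_mono (le_iSup₂ (f := fun i _ =>
        Module.End.eigenspace O (w + (((m : ℤ) * i : ℤ) : k))) i hi)
    refine le_bot_iff.mp ?_
    calc weightSubmodule ℓ x c (w + (((m : ℤ) * n : ℤ) : k)) ⊓
          (⨆ i, ⨆ (_ : i ≠ n), weightSubmodule ℓ x c (w + (((m : ℤ) * i : ℤ) : k)))
        ≤ Submodule.comap (pC.mkQ ∘ₗ ℓ)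
            (Module.End.eigenspace O (w + (((m : ℤ) * n : ℤ) : k))) ⊓
          Submodule.comap (pC.mkQ ∘ₗ ℓ)
            (⨆ i, ⨆ (_ : i ≠ n),
              Module.End.eigenspace O (w + (((m : ℤ) * i : ℤ) : k))) :=
          inf_le_inf (le_of_eq (hWSeq _)) h2
      _ = Submodule.comap (pC.mkQ ∘ₗ ℓ)
            ((Module.End.eigenspace O (w + (((m : ℤ) * n : ℤ) : k))) ⊓
              (⨆ i, ⨆ (_ : i ≠ n),
                Module.End.eigenspace O (w + (((m : ℤ) * i : ℤ) : k)))) :=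
          (Submodule.comap_inf _ _ _).symm
      _ ≤ Submodule.comap (pC.mkQ ∘ₗ ℓ) ⊥ := by
          exact Submodule.comap_mono (iSupIndep_def.mp hEind n).le_bot
      _ = LinearMap.ker (pC.mkQ ∘ₗ ℓ) := Submodule.comap_bot _
      _ = ⊥ := LinearMap.ker_eq_bot.mpr hφAinj
  -- CONCLUSION 2: the span is the sum of the weight spaces
  have hTstable : ∀ (n : ℤ) (z : A),
      z ∈ (⨆ j : ℤ, weightSubmodule ℓ x c (w + (((m : ℤ) * j : ℤ) : k))) →
      (T n : LaurentPolynomial k) • z ∈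
        (⨆ j : ℤ, weightSubmodule ℓ x c (w + (((m : ℤ) * j : ℤ) : k))) := by
    intro n z hz
    set τ : A →ₗ[k] A :=
      ((LinearMap.lsmul (LaurentPolynomial k) A) (T n)).restrictScalars k with hτ
    have h4 : τ z ∈ Submodule.map τ
        (⨆ j : ℤ, weightSubmodule ℓ x c (w + (((m : ℤ) * j : ℤ) : k))) :=
      Submodule.mem_map_of_mem hz
    rw [Submodule.map_iSup] at h4
    have h5 : (⨆ j : ℤ, Submodule.map τ
          (weightSubmodule ℓ x c (w + (((m : ℤ) * j : ℤ) : k))))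
        ≤ ⨆ j : ℤ, weightSubmodule ℓ x c (w + (((m : ℤ) * j : ℤ) : k)) := by
      refine iSup_le fun i => ?_
      rw [Submodule.map_le_iff_le_comap]
      intro y hy
      rw [Submodule.mem_comap]
      have h2 := hMEM n _ y hy
      have h3 : w + (((m : ℤ) * i : ℤ) : k) + (((m : ℤ) * n : ℤ) : k)
          = w + (((m : ℤ) * (i + n) : ℤ) : k) := by push_cast; ring
      rw [h3] at h2
      exact Submodule.mem_iSup_of_mem (i + n) h2
    exact h5 h4
  have hSpan : (Submodule.span (LaurentPolynomial k)
        ((weightSubmodule ℓ x c w : Set A))).restrictScalars k =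
      (⨆ n : ℤ, weightSubmodule ℓ x c (w + (((m : ℤ) * n : ℤ) : k))) := by
    apply le_antisymm
    · intro y hy
      rw [Submodule.restrictScalars_mem] at hy
      induction hy using Submodule.span_induction with
      | mem z hz =>
        refine Submodule.mem_iSup_of_mem 0 ?_
        rw [show w + (((m : ℤ) * (0 : ℤ) : ℤ) : k) = w by push_cast; ring]
        exact hz
      | zero => exact Submodule.zero_mem _
      | add a b _ _ ha hb => exact Submodule.add_mem _ ha hb
      | smul r z _ hz =>
        induction r using LaurentPolynomial.induction_on' with
        | add p q hp hq =>
          rw [add_smul]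
          exact Submodule.add_mem _ hp hq
        | C_mul_T n a =>
          have h1 : ((C a * T n : LaurentPolynomial k)) • z
              = a • ((T n : LaurentPolynomial k) • z) := by
            rw [mul_comm, mul_smul, C_eq_algebraMap, algebraMap_smul]
            exact smul_comm _ _ _
          rw [h1]
          exact Submodule.smul_mem _ _ (hTstable n z hz)
    · refine iSup_le fun n => ?_
      intro y hy
      rw [Submodule.restrictScalars_mem]
      have h1 := hMEM (-n) _ y hy
      have h2 : w + (((m : ℤ) * n : ℤ) : k) + (((m : ℤ) * (-n) : ℤ) : k) = w := by
        push_cast; ring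
      rw [h2] at h1
      have h3 : y = (T n : LaurentPolynomial k) • ((T (-n) : LaurentPolynomial k) • y) := by
        rw [← mul_smul, ← T_add, add_neg_cancel, T_zero, one_smul]
      rw [h3]
      exact Submodule.smul_mem _ _ (Submodule.subset_span h1)
  -- representation of tensors
  have hν : ∀ (y : weightSubmodule ℓ x c w) (r : LaurentPolynomial k),
      nuMap k A (weightSubmodule ℓ x c w) (y ⊗ₜ r) = r • (y : A) := fun y r =>
    TensorProduct.lift.tmul y r
  have hEXREP : ∀ z : (weightSubmodule ℓ x c w) ⊗[k] LaurentPolynomial k,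
      ∃ F : ℤ →₀ (weightSubmodule ℓ x c w),
        z = F.sum fun n y => y ⊗ₜ[k] (T n : LaurentPolynomial k) := by
    intro z
    induction z using TensorProduct.induction_on with
    | zero => exact ⟨0, by simp⟩
    | add p q hp hq =>
      obtain ⟨F, hF⟩ := hp
      obtain ⟨G, hG⟩ := hq
      refine ⟨F + G, ?_⟩
      rw [hF, hG]
      refine (Finsupp.sum_add_index' ?_ ?_).symm
      · exact fun n => zero_tmul _ _
      · exact fun n y1 y2 => add_tmul y1 y2 _
    | tmul y r =>
      induction r using LaurentPolynomial.induction_on' with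
      | add p q hp hq =>
        obtain ⟨F, hF⟩ := hp
        obtain ⟨G, hG⟩ := hq
        refine ⟨F + G, ?_⟩
        rw [tmul_add, hF, hG]
        refine (Finsupp.sum_add_index' ?_ ?_).symm
        · exact fun n => zero_tmul _ _
        · exact fun n y1 y2 => add_tmul y1 y2 _
      | C_mul_T n a =>
        refine ⟨Finsupp.single n (a • y), ?_⟩
        refine Eq.trans ?_ (Finsupp.sum_single_index
          (h := fun n (y : weightSubmodule ℓ x c w) => y ⊗ₜ[k] (T n : LaurentPolynomial k))
          (zero_tmul _ _)).symm
        rw [show (C a * T n : LaurentPolynomial k) = a • T n by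
            rw [Algebra.smul_def, C_eq_algebraMap]]
        exact (smul_tmul a y (T n)).symm
  -- sums of elements of independent weight spaces vanish termwise
  have hZSUM : ∀ (s : Finset ℤ) (v : ℤ → A),
      (∀ n ∈ s, v n ∈ weightSubmodule ℓ x c (w + (((m : ℤ) * n : ℤ) : k))) →
      (∑ n ∈ s, v n) = 0 → ∀ n ∈ s, v n = 0 := by
    intro s
    induction s using Finset.induction_on with
    | empty => intro v _ _ n hn; exact absurd hn (Finset.notMem_empty n)
    | insert a s ha ih =>
      intro v hv hsum
      rw [Finset.sum_insert ha] at hsum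
      have hva : v a = 0 := by
        have h1 : v a ∈ weightSubmodule ℓ x c (w + (((m : ℤ) * a : ℤ) : k)) :=
          hv a (Finset.mem_insert_self a s)
        have h2 : v a ∈ ⨆ i, ⨆ (_ : i ≠ a),
            weightSubmodule ℓ x c (w + (((m : ℤ) * i : ℤ) : k)) := by
          have h3 : v a = -∑ n ∈ s, v n := eq_neg_of_add_eq_zero_left hsum
          rw [h3]
          refine Submodule.neg_mem _ (Submodule.sum_mem _ fun n hn => ?_)
          have hna : n ≠ a := fun e => ha (e ▸ hn)
          exact Submodule.mem_iSup_of_mem n (Submodule.mem_iSup_of_mem hna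
            (hv n (Finset.mem_insert_of_mem hn)))
        exact Submodule.disjoint_def.mp (iSupIndep_def.mp hIndep a) (v a) h1 h2
      have hsum' : ∑ n ∈ s, v n = 0 := by
        rw [hva, zero_add] at hsum
        exact hsum
      intro n hn
      rcases Finset.mem_insert.mp hn with h | h
      · rw [h]; exact hva
      · exact ih v (fun n' hn' => hv n' (Finset.mem_insert_of_mem hn')) hsum' n h
  -- CONCLUSION 3: injectivity of ν
  have hInj : Function.Injective (nuMap k A (weightSubmodule ℓ x c w)) := by
    rw [← LinearMap.ker_eq_bot]
    refine (Submodule.eq_bot_iff _).mpr fun z hz => ?_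
    rw [LinearMap.mem_ker] at hz
    obtain ⟨F, rfl⟩ := hEXREP z
    rw [map_finsuppSum] at hz
    simp only [hν] at hz
    rw [Finsupp.sum] at hz
    have hterm : ∀ n ∈ F.support, (T n : LaurentPolynomial k) • ((F n : A)) = 0 := by
      refine hZSUM F.support _ (fun n _ => hMEM n w (F n) (F n).2) hz
    have hF0 : F = 0 := by
      ext n : 1
      by_cases hn : n ∈ F.support
      · have h1 := hterm n hn
        have h2 : ((F n : A)) = 0 := by
          have h3 : (T (-n) : LaurentPolynomial k) • ((T n : LaurentPolynomial k) •
              ((F n : A))) = ((F n : A)) := by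
            rw [← mul_smul, ← T_add, neg_add_cancel, T_zero, one_smul]
          rw [h1, smul_zero] at h3
          exact h3.symm
        exact Subtype.ext h2
      · exact Finsupp.notMem_support_iff.mp hn
    rw [hF0]
    simp
  -- CONCLUSION 4: the range of ν
  have hνsmul : ∀ (r : LaurentPolynomial k)
      (p : (weightSubmodule ℓ x c w) ⊗[k] LaurentPolynomial k),
      ∃ q, nuMap k A (weightSubmodule ℓ x c w) q
        = r • nuMap k A (weightSubmodule ℓ x c w) p := by
    intro r p
    induction p using TensorProduct.induction_on with
    | zero => exact ⟨0, by simp⟩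
    | tmul y s => exact ⟨y ⊗ₜ (r * s), by rw [hν, hν, mul_smul]⟩
    | add p q hp hq =>
      obtain ⟨qp, hqp⟩ := hp
      obtain ⟨qq, hqq⟩ := hq
      exact ⟨qp + qq, by rw [map_add, map_add, hqp, hqq, smul_add]⟩
  have hRange : LinearMap.range (nuMap k A (weightSubmodule ℓ x c w)) =
      (Submodule.span (LaurentPolynomial k)
        ((weightSubmodule ℓ x c w : Set A))).restrictScalars k := by
    apply le_antisymm
    · rintro _ ⟨z, rfl⟩
      rw [Submodule.restrictScalars_mem]
      induction z using TensorProduct.induction_on with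
      | zero => simp
      | tmul y r =>
        rw [hν]
        exact Submodule.smul_mem _ _ (Submodule.subset_span y.2)
      | add p q hp hq =>
        rw [map_add]
        exact Submodule.add_mem _ hp hq
    · intro y hy
      rw [Submodule.restrictScalars_mem] at hy
      induction hy using Submodule.span_induction with
      | mem z hz => exact ⟨⟨z, hz⟩ ⊗ₜ 1, by rw [hν, one_smul]⟩
      | zero => exact zero_mem _
      | add a b _ _ ha hb => exact add_mem ha hb
      | smul r z hz hrz =>
        obtain ⟨p, hp⟩ := hrz
        obtain ⟨q, hq⟩ := hνsmul r p
        exact ⟨q, by rw [hq, hp]⟩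
  exact ⟨hIndep, hSpan, hInj, hRange⟩
end
end

section
/- In the setup below, for every weight w of O_x the eigenspace A_w is finite dimensional over k; indeed dim_k A_w ≤ rank_R A. Moreover the set of weights of O_x is contained in a finite union of cosets w₁ + mℤ, …, w_s + mℤ (there are only finitely many weight series). -/
open LaurentPolynomial TensorProduct

noncomputable section

private lemma lie_sum_left {L : Type*} [LieRing L] {ι : Type*}
    (s : Finset ι) (f : ι → L) (z : L) : ⁅(∑ i ∈ s, f i : L), z⁆ = ∑ i ∈ s, ⁅f i, z⁆ := by
  induction s using Finset.cons_induction with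
  | empty => simp
  | cons a s ha ih => simp [Finset.sum_cons, add_lie, ih]

private lemma lie_sum_right {L : Type*} [LieRing L] {ι : Type*}
    (s : Finset ι) (f : ι → L) (z : L) : ⁅z, (∑ i ∈ s, f i : L)⁆ = ∑ i ∈ s, ⁅z, f i⁆ := by
  induction s using Finset.cons_induction with
  | empty => simp
  | cons a s ha ih => simp [Finset.sum_cons, lie_add, ih]

private lemma laurent_smul_sum {k M : Type*} [CommRing k] [AddCommGroup M] [Module k M]
    [Module (LaurentPolynomial k) M] [IsScalarTower k (LaurentPolynomial k) M]
    (g : LaurentPolynomial k) (v : M) :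
    g • v = Finsupp.sum g.coeff (fun n a => a • ((T n : LaurentPolynomial k) • v)) := by
  induction g using AddMonoidAlgebra.induction_linear with
  | zero => simp
  | add f g hf hg =>
      rw [AddMonoidAlgebra.coeff_add, Finsupp.sum_add_index' (fun n => by simp) (fun n a b => by rw [add_smul]), ← hf, ← hg,
        add_smul]
  | single n a =>
      rw [AddMonoidAlgebra.coeff_single, Finsupp.sum_single_index (by simp)]
      rw [single_eq_C_mul_T, mul_smul, C_eq_algebraMap, algebraMap_smul]


/-- Every weight space `A_w` is finite dimensional over `k` with
`dim_k A_w ≤ rank_R A`, and there are only finitely many weight series. -/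
theorem finiteness_of_weight_spaces
    -- the base field
    (k : Type) [Field k] [IsAlgClosed k] [CharZero k]
    -- the simple finite-dimensional Lie algebra 𝔤
    (𝔤 : Type) [LieRing 𝔤] [LieAlgebra k 𝔤] [FiniteDimensional k 𝔤]
    [LieAlgebra.IsSimple k 𝔤]
    -- the order m of σ and a primitive m-th root of unity ζ
    (m : ℕ) (hm : 0 < m)
    (σ : 𝔤 ≃ₗ⁅k⁆ 𝔤) (hσ : ∀ y : 𝔤, (⇑σ)^[m] y = y)
    (ζ : k) (hζ : IsPrimitiveRoot ζ m)
    -- the twisted loop algebra L(𝔤,σ) = ⊕_{i∈ℤ} 𝔤_ī ⊗ sⁱ, an R-Lie algebra for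
    -- R = k[t^{±1}] = LaurentPolynomial k (with t = sᵐ);
    -- `u p y` represents `y ⊗ sᵖ` for `y ∈ 𝔤_p̄`, i.e. `σ y = ζ^p • y`
    (Lg : Type) [LieRing Lg] [LieAlgebra (LaurentPolynomial k) Lg]
    [LieAlgebra k Lg] [IsScalarTower k (LaurentPolynomial k) Lg]
    (u : ℤ → 𝔤 →ₗ[k] Lg)
    (hu_bracket : ∀ (p q : ℤ) (y z : 𝔤), σ y = ζ ^ p • y → σ z = ζ ^ q • z →
      ⁅u p y, u q z⁆ = u (p + q) ⁅y, z⁆)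
    (hu_t : ∀ (p : ℤ) (y : 𝔤), σ y = ζ ^ p • y →
      (T 1 : LaurentPolynomial k) • u p y = u (p + (m : ℤ)) y)
    (hu_span : ∀ l : Lg, ∃ f : ℤ →₀ 𝔤, (∀ i, σ (f i) = ζ ^ i • f i) ∧
      l = f.sum fun i yi => u i yi)
    (hu_ind : ∀ f : ℤ →₀ 𝔤, (∀ i, σ (f i) = ζ ^ i • f i) →
      (f.sum fun i yi => u i yi) = 0 → f = 0)
    -- the twisted affine Kac–Moody algebra L̂(𝔤,σ) = L(𝔤,σ) ⊕ kc ⊕ kd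
    (Lhat : Type) [LieRing Lhat] [LieAlgebra k Lhat]
    (c d : Lhat) (ι : Lg →ₗ[k] Lhat)
    (hc : ∀ z : Lhat, ⁅c, z⁆ = 0)
    (hd : ∀ (p : ℤ) (y : 𝔤), σ y = ζ ^ p • y →
      ⁅d, ι (u p y)⁆ = (p : k) • ι (u p y))
    (hbr : ∀ (p q : ℤ) (y z : 𝔤), σ y = ζ ^ p • y → σ z = ζ ^ q • z →
      ⁅ι (u p y), ι (u q z)⁆ =
        ι (u (p + q) ⁅y, z⁆) +
          (if p + q = 0 then (p : k) * killingForm k 𝔤 y z else 0) • c)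
    (hdec : ∀ z : Lhat, ∃ (l : Lg) (a b : k), z = ι l + a • c + b • d)
    (huniq : ∀ (l : Lg) (a b : k), ι l + a • c + b • d = 0 → l = 0 ∧ a = 0 ∧ b = 0)
    -- the invariant nondegenerate bilinear form (·,·) on L̂(𝔤,σ)
    (B : LinearMap.BilinForm k Lhat)
    (hBsymm : ∀ z w : Lhat, B z w = B w z)
    (hBinv : ∀ z w y : Lhat, B ⁅z, w⁆ y = B z ⁅w, y⁆)
    (hBval : ∀ (p q : ℤ) (y z : 𝔤), σ y = ζ ^ p • y → σ z = ζ ^ q • z →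
      B (ι (u p y)) (ι (u q z)) = if p + q = 0 then killingForm k 𝔤 y z else 0)
    (hBc : ∀ l : Lg, B c (ι l) = 0) (hBd : ∀ l : Lg, B d (ι l) = 0)
    (hBcc : B c c = 0) (hBdd : B d d = 0) (hBcd : B c d = 1)
    -- the R-Lie subalgebra A of L(𝔤,σ), free of finite rank over R,
    -- with A ⊗_R K semisimple over the fraction field K of R
    (A : Type) [LieRing A] [LieAlgebra (LaurentPolynomial k) A]
    [Module k A] [IsScalarTower k (LaurentPolynomial k) A]
    [Module.Free (LaurentPolynomial k) A] [Module.Finite (LaurentPolynomial k) A]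
    (hss : LieAlgebra.IsSemisimple (FractionRing (LaurentPolynomial k))
      (FractionRing (LaurentPolynomial k) ⊗[LaurentPolynomial k] A))
    (j : A →ₗ⁅LaurentPolynomial k⁆ Lg) (hj : Function.Injective j)
    -- the embedding ℓ = ι ∘ j of A into L̂(𝔤,σ)
    (ℓ : A →ₗ[k] Lhat) (hℓ : ∀ a : A, ℓ a = ι (j a))
    -- Â = A ⊕ kc ⊕ kd, a subalgebra of L̂(𝔤,σ) on which the form is nondegenerate
    (Ahat : Submodule k Lhat)
    (hAhat : Ahat = LinearMap.range ℓ ⊔ Submodule.span k {c} ⊔ Submodule.span k {d})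
    (hA_closed : ∀ z ∈ Ahat, ∀ w ∈ Ahat, ⁅z, w⁆ ∈ Ahat)
    (hBnd : ∀ z ∈ Ahat, (∀ w ∈ Ahat, B z w = 0) → z = 0)
    -- the element x = x' + d with 0 ≠ x' ∈ A, with ad(x) k-diagonalizable on Â
    (x' : A) (hx'0 : x' ≠ 0) (x : Lhat) (hx : x = ℓ x' + d)
    (hdiag : ∀ z ∈ Ahat, z ∈ ⨆ w : k,
      Ahat ⊓ Module.End.eigenspace (LieAlgebra.ad k Lhat x) w)
    :
    (∀ w : k, weightSubmodule ℓ x c w ≠ ⊥ →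
      Module.Finite k ↥(weightSubmodule ℓ x c w) ∧
      Module.rank k ↥(weightSubmodule ℓ x c w) ≤
        Module.rank (LaurentPolynomial k) A) ∧
    (∃ ws : Finset k, ∀ w : k, weightSubmodule ℓ x c w ≠ ⊥ →
      ∃ w' ∈ ws, ∃ n : ℤ, w = w' + (((m : ℤ) * n : ℤ) : k)) := by
  classical
  -- basic consequences of the injectivity hypotheses
  have hζ0 : ζ ≠ 0 := hζ.ne_zero hm.ne'
  have hζm : ζ ^ (m : ℤ) = 1 := by
    rw [zpow_natCast]; exact hζ.pow_eq_one
  have hσshift : ∀ (p n : ℤ) (y : 𝔤), σ y = ζ ^ p • y → σ y = ζ ^ (p + (m : ℤ) * n) • y := by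
    intro p n y h
    rw [zpow_add₀ hζ0, zpow_mul, hζm, one_zpow, mul_one]; exact h
  have hm0 : (m : k) ≠ 0 := Nat.cast_ne_zero.mpr hm.ne'
  have hmn_inj : ∀ n n' : ℤ, (m : k) * (n : k) = (m : k) * (n' : k) → n = n' := by
    intro n n' h
    exact_mod_cast Int.cast_injective (mul_left_cancel₀ hm0 h)
  -- the `T`-shift on the generators
  have hU : ∀ (n p : ℤ) (y : 𝔤), σ y = ζ ^ p • y →
      (T n : LaurentPolynomial k) • u p y = u (p + (m : ℤ) * n) y := by
    intro n
    induction n using Int.induction_on with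
    | zero => intro p y hy; simp
    | succ n ih =>
        intro p y hy
        have h1 : (T ((n : ℤ) + 1) : LaurentPolynomial k) = T 1 * T n := by
          rw [← T_add]; ring_nf
        have h2 := hu_t (p + (m : ℤ) * n) y (hσshift p n y hy)
        rw [h1, mul_smul, ih p y hy, h2]
        congr 1; ring
    | pred n ih =>
        intro p y hy
        have e1 := hu_t (p + (m : ℤ) * (-(n : ℤ) - 1)) y (hσshift p (-(n : ℤ) - 1) y hy)
        have e3 := ih p y hy
        have e4 : p + (m : ℤ) * (-(n : ℤ) - 1) + (m : ℤ) = p + (m : ℤ) * (-(n : ℤ)) := by ring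
        rw [e4] at e1
        have e5 : (T (-(n : ℤ) - 1) : LaurentPolynomial k) = T (-1) * T (-(n : ℤ)) := by
          rw [← T_add]; ring_nf
        rw [e5, mul_smul, e3, ← e1, smul_smul, ← T_add]
        norm_num
  -- brackets of images of `ι` agree with `ι` of brackets, modulo the centre
  have hLie : ∀ l l' : Lg, ∃ μ : k, ⁅ι l, ι l'⁆ = ι ⁅l, l'⁆ + μ • c := by
    intro l l'
    obtain ⟨f, hf, hlf⟩ := hu_span l
    obtain ⟨g, hg, hlg⟩ := hu_span l'
    refine ⟨∑ i ∈ f.support, ∑ p ∈ g.support,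
      (if (i : ℤ) + p = 0 then (i : k) * killingForm k 𝔤 (f i) (g p) else 0), ?_⟩
    have hbl : ⁅l, l'⁆ = ∑ i ∈ f.support, ∑ p ∈ g.support, u (i + p) ⁅f i, g p⁆ := by
      rw [hlf, hlg]
      simp only [Finsupp.sum]
      rw [lie_sum_left]
      refine Finset.sum_congr rfl fun i _ => ?_
      rw [lie_sum_right]
      exact Finset.sum_congr rfl fun p _ => hu_bracket i p (f i) (g p) (hf i) (hg p)
    calc ⁅ι l, ι l'⁆
        = ∑ i ∈ f.support, ∑ p ∈ g.support, ⁅ι (u i (f i)), ι (u p (g p))⁆ := by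
          rw [hlf, hlg]
          simp only [Finsupp.sum, map_sum]
          rw [lie_sum_left]
          exact Finset.sum_congr rfl fun i _ => by rw [lie_sum_right]
      _ = ∑ i ∈ f.support, ∑ p ∈ g.support,
            (ι (u (i + p) ⁅f i, g p⁆) +
              (if (i : ℤ) + p = 0 then (i : k) * killingForm k 𝔤 (f i) (g p) else 0) • c) := by
          exact Finset.sum_congr rfl fun i _ => Finset.sum_congr rfl fun p _ =>
            hbr i p (f i) (g p) (hf i) (hg p)
      _ = ι ⁅l, l'⁆ + (∑ i ∈ f.support, ∑ p ∈ g.support,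
            (if (i : ℤ) + p = 0 then (i : k) * killingForm k 𝔤 (f i) (g p) else 0)) • c := by
          rw [hbl, map_sum]
          simp only [map_sum, Finset.sum_smul, Finset.sum_add_distrib]
  -- the action of `ad d` and the `T`-shifts
  have hDd : ∀ l : Lg, ∃ l₂ : Lg, ∀ n : ℤ,
      ⁅d, ι ((T n : LaurentPolynomial k) • l)⁆ =
        ι ((T n : LaurentPolynomial k) • l₂) +
          ((m : k) * (n : k)) • ι ((T n : LaurentPolynomial k) • l) := by
    intro l
    obtain ⟨f, hf, rfl⟩ := hu_span l
    refine ⟨Finsupp.sum f fun i yi => ((i : ℤ) : k) • u i yi, fun n => ?_⟩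
    have hTl : (T n : LaurentPolynomial k) • (Finsupp.sum f fun i yi => u i yi) =
        ∑ i ∈ f.support, u (i + (m : ℤ) * n) (f i) := by
      simp only [Finsupp.sum, Finset.smul_sum]
      exact Finset.sum_congr rfl fun i _ => hU n i (f i) (hf i)
    have hTl₂ : (T n : LaurentPolynomial k) • (Finsupp.sum f fun i yi => ((i : ℤ) : k) • u i yi) =
        ∑ i ∈ f.support, ((i : ℤ) : k) • u (i + (m : ℤ) * n) (f i) := by
      simp only [Finsupp.sum, Finset.smul_sum]
      refine Finset.sum_congr rfl fun i _ => ?_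
      rw [smul_comm, hU n i (f i) (hf i)]
    rw [hTl, hTl₂, map_sum, map_sum, lie_sum_right, Finset.smul_sum, ← Finset.sum_add_distrib]
    refine Finset.sum_congr rfl fun i _ => ?_
    rw [hd (i + (m : ℤ) * n) (f i) (hσshift i n (f i) (hf i)), map_smul]
    push_cast
    rw [add_smul]
  -- the weight shift: T n maps A_w into A_{w + m n}
  have hTW : ∀ (w : k) (n : ℤ) (y : A), y ∈ weightSubmodule ℓ x c w →
      (T n : LaurentPolynomial k) • y ∈ weightSubmodule ℓ x c (w + (m : k) * (n : k)) := by
    intro w n y hy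
    obtain ⟨μ, hμ⟩ := hy
    obtain ⟨l₂, hl₂⟩ := hDd (j y)
    obtain ⟨μ₁, hμ₁⟩ := hLie (j x') (j y)
    have hd0 : ⁅d, ι (j y)⁆ = ι l₂ := by
      have h00 := hl₂ 0
      simpa using h00
    have hxy : ⁅x, ℓ y⁆ = ι ⁅j x', j y⁆ + μ₁ • c + ι l₂ := by
      rw [hx, add_lie, hℓ x', hℓ y, hμ₁, hd0]
    have h' : ι ⁅j x', j y⁆ + μ₁ • c + ι l₂ = w • ι (j y) + μ • c := by
      rw [← hxy, hμ, hℓ y]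
    have hstar : ⁅j x', j y⁆ + l₂ = w • j y := by
      have h2 := huniq (⁅j x', j y⁆ + l₂ - w • j y) (μ₁ - μ) 0 ?_
      · have h3 := h2.1
        rwa [sub_eq_zero] at h3
      · rw [map_sub, map_add, map_smul, sub_smul, zero_smul, add_zero]
        have h'' : ι ⁅j x', j y⁆ + μ₁ • c + ι l₂ - (w • ι (j y) + μ • c) = 0 := by
          rw [h', sub_self]
        rw [← h'']
        abel
    obtain ⟨μ₂, hμ₂⟩ := hLie (j x') ((T n : LaurentPolynomial k) • j y)
    refine ⟨μ₂, ?_⟩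
    have hjt : ℓ ((T n : LaurentPolynomial k) • y) = ι ((T n : LaurentPolynomial k) • j y) := by
      rw [hℓ, map_smul]
    rw [hx, add_lie, hℓ x', hjt, hμ₂, hl₂ n]
    have hgoal : ι ((T n : LaurentPolynomial k) • ⁅j x', j y⁆) +
        ι ((T n : LaurentPolynomial k) • l₂) = w • ι ((T n : LaurentPolynomial k) • j y) := by
      rw [← map_add, ← smul_add, hstar, smul_comm, map_smul]
    rw [lie_smul, add_smul, ← hgoal]
    abel
  -- elements of distinct weight spaces are independent
  have hL : ∀ (ι'' : Type) [Fintype ι''] (wt : ι'' → k) (z : ι'' → A),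
      (∀ q, z q ∈ weightSubmodule ℓ x c (wt q)) → Function.Injective wt →
      (∑ q, z q) = 0 → ∀ q, z q = 0 := by
    intro ι'' inst wt z hz hinj hsum
    letI := inst
    choose μ hμ using fun q => hz q
    have hxc : ⁅x, c⁆ = 0 := by rw [← lie_skew, hc x, neg_zero]
    set e : ι'' → Lhat := fun q => wt q • ℓ (z q) + μ q • c with he
    have hxe : ∀ q, ⁅x, e q⁆ = wt q • e q := by
      intro q
      simp only [he, lie_add, lie_smul, hμ q, hxc, smul_zero, add_zero, smul_add, smul_smul]
    have h0 : (∑ q, ℓ (z q)) = 0 := by rw [← map_sum, hsum, map_zero]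
    have h1 : (∑ q, e q) = 0 := by
      have h1' := congrArg (fun v => ⁅x, v⁆) h0
      simp only [lie_zero] at h1'
      rw [lie_sum_right] at h1'
      simp only [hμ] at h1'
      exact h1'
    have h2 : (∑ q, wt q • e q) = 0 := by
      have h2' := congrArg (fun v => ⁅x, v⁆) h1
      simp only [lie_zero] at h2'
      rw [lie_sum_right] at h2'
      simpa only [hxe] using h2'
    have h3 : ∀ q, wt q ≠ 0 → e q = 0 := by
      intro q₀ hq₀
      by_contra he₀
      set S : Finset ι'' := Finset.univ.filter (fun q => wt q ≠ 0 ∧ e q ≠ 0) with hS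
      have hq₀S : q₀ ∈ S := Finset.mem_filter.2 ⟨Finset.mem_univ _, hq₀, he₀⟩
      have hli : LinearIndependent k (fun q : ↥S => e q) := by
        refine Module.End.eigenvectors_linearIndependent' (LieAlgebra.ad k Lhat x)
          (fun q : ↥S => wt q) (fun a b hab => Subtype.ext (hinj hab)) _ (fun q => ⟨?_, ?_⟩)
        · rw [Module.End.mem_eigenspace_iff, LieAlgebra.ad_apply]
          exact hxe q
        · exact (Finset.mem_filter.1 q.2).2.2
      have hsum2 : (∑ q : ↥S, wt (q : ι'') • e (q : ι'')) = 0 := by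
        rw [Finset.sum_coe_sort S (fun q => wt q • e q)]
        rw [← h2]
        refine Finset.sum_subset (Finset.subset_univ S) ?_
        intro q _ hqS
        have : ¬(wt q ≠ 0 ∧ e q ≠ 0) := by
          intro hcon2
          exact hqS (Finset.mem_filter.2 ⟨Finset.mem_univ _, hcon2⟩)
        rcases not_and_or.mp this with h | h
        · rw [not_not.mp h, zero_smul]
        · rw [not_not.mp h, smul_zero]
      have hall := Fintype.linearIndependent_iff.mp hli (fun q : ↥S => wt q) hsum2
      exact hq₀ (hall ⟨q₀, hq₀S⟩)
    have h4 : ∀ q, wt q ≠ 0 → z q = 0 := by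
      intro q hq
      have he0 := h3 q hq
      simp only [he] at he0
      rw [hℓ] at he0
      have h5 := huniq (wt q • j (z q)) (μ q) 0 ?_
      · rcases smul_eq_zero.mp h5.1 with h | h
        · exact absurd h hq
        · exact hj (h.trans (j.map_zero).symm)
      · rw [map_smul, zero_smul, add_zero]
        exact he0
    intro q₀
    by_cases hq : wt q₀ = 0
    · have hothers : ∀ q, q ≠ q₀ → z q = 0 := fun q hqq =>
        h4 q (fun h0 => hqq (hinj (h0.trans hq.symm)))
      have hs := Finset.sum_eq_single_of_mem q₀ (Finset.mem_univ q₀)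
        (fun q _ hqq => hothers q hqq)
      exact hs.symm.trans hsum
    · exact h4 q₀ hq
  -- families of weight vectors with compatible weights are R-linearly independent
  have hRLI : ∀ (ι' : Type) (v : ι' → A) (wt : ι' → k),
      (∀ i, v i ∈ weightSubmodule ℓ x c (wt i)) →
      (∀ (s : Finset ι') (a : ι' → k), (∑ i ∈ s, a i • v i) = 0 → ∀ i ∈ s, a i = 0) →
      (∀ (i i' : ι') (n n' : ℤ), wt i + (m : k) * (n : k) = wt i' + (m : k) * (n' : k) → n = n') →
      LinearIndependent (LaurentPolynomial k) v := by
    intro ι' v wt hv hk hwt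
    rw [linearIndependent_iff']
    intro s g hrel i₀ hi₀
    set gc : ι' → (ℤ →₀ k) := fun i => (g i).coeff with hgc
    set J : Finset ℤ := s.biUnion (fun i => (gc i).support) with hJ
    set Wt : ι' × ℤ → k := fun p => wt p.1 + (m : k) * ((p.2 : ℤ) : k) with hWt
    set term : ι' × ℤ → A :=
      fun p => (gc p.1) p.2 • ((T p.2 : LaurentPolynomial k) • v p.1) with hterm
    have hexp : ∀ i ∈ s, g i • v i = ∑ n ∈ J, term (i, n) := by
      intro i hi
      rw [laurent_smul_sum]
      exact Finsupp.sum_of_support_subset _ (fun n hn => Finset.mem_biUnion.2 ⟨i, hi, hn⟩) _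
        (fun n _ => by rw [zero_smul])
    have htermmem : ∀ p : ι' × ℤ, term p ∈ weightSubmodule ℓ x c (Wt p) :=
      fun p => Submodule.smul_mem _ _ (hTW (wt p.1) p.2 (v p.1) (hv p.1))
    have hrel2 : (∑ p ∈ s ×ˢ J, term p) = 0 := by
      rw [Finset.sum_product, ← hrel]
      exact Finset.sum_congr rfl fun i hi => (hexp i hi).symm
    set Z : k → A := fun w₀ => ∑ p ∈ (s ×ˢ J).filter (fun p => Wt p = w₀), term p with hZ
    set Wv : Finset k := (s ×ˢ J).image Wt with hWv
    have hfib : ∀ w₀ : ↥Wv, Z (w₀ : k) = 0 := by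
      refine hL ↥Wv (fun w₀ => (w₀ : k)) (fun w₀ => Z (w₀ : k)) ?_ Subtype.coe_injective ?_
      · intro q
        refine Submodule.sum_mem _ fun p hp => ?_
        have hq2 := (Finset.mem_filter.1 hp).2
        show term p ∈ weightSubmodule ℓ x c (q : k)
        rw [← hq2]
        exact htermmem p
      · rw [Finset.sum_coe_sort Wv (fun w₀ => Z w₀), hZ]
        rw [Finset.sum_fiberwise_of_maps_to (fun p hp => Finset.mem_image_of_mem Wt hp) term]
        exact hrel2
    suffices hcoef : ∀ n : ℤ, (gc i₀) n = 0 by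
      exact AddMonoidAlgebra.ext (Finsupp.ext hcoef)
    intro n
    by_cases hn : n ∈ J
    · have hmemprod : (i₀, n) ∈ s ×ˢ J := Finset.mem_product.2 ⟨hi₀, hn⟩
      have hw₀ : Wt (i₀, n) ∈ Wv := Finset.mem_image_of_mem Wt hmemprod
      have hfib₀ := hfib ⟨Wt (i₀, n), hw₀⟩
      set F₀ : Finset (ι' × ℤ) := (s ×ˢ J).filter (fun p => Wt p = Wt (i₀, n)) with hF₀
      have hsnd : ∀ p ∈ F₀, p.2 = n := by
        intro p hp
        exact hwt p.1 i₀ p.2 n (Finset.mem_filter.1 hp).2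
      have hZ2 : Z (Wt (i₀, n)) =
          (T n : LaurentPolynomial k) • ∑ p ∈ F₀, ((gc p.1) n) • v p.1 := by
        rw [Finset.smul_sum]
        refine Finset.sum_congr rfl fun p hp => ?_
        have h2n := hsnd p hp
        rw [hterm]
        simp only []
        rw [h2n, smul_comm]
      have hZ0 : (∑ p ∈ F₀, ((gc p.1) n) • v p.1) = 0 := by
        rw [hZ2] at hfib₀
        calc (∑ p ∈ F₀, ((gc p.1) n) • v p.1)
            = ((T (-n) * T n : LaurentPolynomial k)) • ∑ p ∈ F₀, ((gc p.1) n) • v p.1 := by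
              rw [← T_add, neg_add_cancel, T_zero, one_smul]
          _ = (T (-n) : LaurentPolynomial k) •
              ((T n : LaurentPolynomial k) • ∑ p ∈ F₀, ((gc p.1) n) • v p.1) := mul_smul _ _ _
          _ = 0 := by rw [hfib₀, smul_zero]
      have hinj₀ : ∀ p ∈ F₀, ∀ q ∈ F₀, p.1 = q.1 → p = q := by
        intro p hp q hq hpq
        exact Prod.ext hpq ((hsnd p hp).trans (hsnd q hq).symm)
      have hsum₀ : (∑ i ∈ F₀.image Prod.fst, ((gc i) n) • v i) = 0 := by
        rw [Finset.sum_image hinj₀]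
        exact hZ0
      refine hk (F₀.image Prod.fst) (fun i => (gc i) n) hsum₀ i₀ ?_
      exact Finset.mem_image.2 ⟨(i₀, n), Finset.mem_filter.2 ⟨hmemprod, rfl⟩, rfl⟩
    · by_contra hne
      exact hn (Finset.mem_biUnion.2 ⟨i₀, hi₀, Finsupp.mem_support_iff.2 hne⟩)
  constructor
  · -- Part 1: finite dimensionality and rank bound of each weight space
    intro w _
    have hrankle : Module.rank k ↥(weightSubmodule ℓ x c w) ≤
        (Module.finrank (LaurentPolynomial k) A : Cardinal) := by
      apply rank_le
      intro s hs
      set vv : ↥s → A := fun i => ((i : ↥(weightSubmodule ℓ x c w)) : A) with hvv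
      have hkind : LinearIndependent k vv :=
        hs.map' (weightSubmodule ℓ x c w).subtype (Submodule.ker_subtype _)
      have hmem : ∀ i : ↥s, vv i ∈ weightSubmodule ℓ x c w := fun i =>
        (i : ↥(weightSubmodule ℓ x c w)).2
      have hRind : LinearIndependent (LaurentPolynomial k) vv := by
        refine hRLI ↥s vv (fun _ => w) hmem ?_ ?_
        · intro s' a hsum i hi
          exact linearIndependent_iff'.mp hkind s' a hsum i hi
        · intro i i' n n' hEq
          exact hmn_inj n n' (add_left_cancel hEq)
      have hcle := hRind.cardinal_le_rank
      rw [← Module.finrank_eq_rank (LaurentPolynomial k) A] at hcle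
      rwa [Cardinal.mk_coe_finset, Nat.cast_le] at hcle
    constructor
    · exact Module.rank_lt_aleph0_iff.mp
        (lt_of_le_of_lt hrankle (Cardinal.nat_lt_aleph0 _))
    · rw [← Module.finrank_eq_rank (LaurentPolynomial k) A]
      exact hrankle
  · -- Part 2: finitely many weight series
    by_contra hcon
    push_neg at hcon
    set pick : Finset k → k := fun ws => (hcon ws).choose with hpick
    have hpickP : ∀ ws : Finset k, weightSubmodule ℓ x c (pick ws) ≠ ⊥ ∧
        ∀ w' ∈ ws, ∀ n : ℤ, pick ws ≠ w' + (((m : ℤ) * n : ℤ) : k) := by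
      intro ws
      have h := (hcon ws).choose_spec
      exact ⟨h.1, fun w' hw' n => h.2 w' hw' n⟩
    set WS : ℕ → Finset k := fun i => Nat.rec ∅ (fun _ acc => insert (pick acc) acc) i with hWS
    have hWSsucc : ∀ i, WS (i + 1) = insert (pick (WS i)) (WS i) := fun i => rfl
    set wseq : ℕ → k := fun i => pick (WS i) with hwseq
    have hWSmono : ∀ i i' : ℕ, i ≤ i' → WS i ⊆ WS i' := by
      intro i i' hii
      induction i' with
      | zero => rw [Nat.le_zero.mp hii]
      | succ i'' ih =>
          rcases Nat.lt_or_ge i (i'' + 1) with h | h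
          · refine (ih (Nat.lt_succ_iff.mp h)).trans ?_
            rw [hWSsucc]
            exact Finset.subset_insert _ _
          · rw [Nat.le_antisymm hii h]
    have hmemws : ∀ i i' : ℕ, i < i' → wseq i ∈ WS i' := by
      intro i i' hii
      refine hWSmono (i + 1) i' hii ?_
      rw [hWSsucc]
      exact Finset.mem_insert_self _ _
    have havoid : ∀ i i' : ℕ, i < i' → ∀ n : ℤ, wseq i' ≠ wseq i + (((m : ℤ) * n : ℤ) : k) :=
      fun i i' hii n => (hpickP (WS i')).2 (wseq i) (hmemws i i' hii) n
    set N : ℕ := Module.finrank (LaurentPolynomial k) A + 1 with hN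
    have hcoset : ∀ (i i' : Fin N) (n n' : ℤ),
        wseq i + (m : k) * (n : k) = wseq i' + (m : k) * (n' : k) → n = n' := by
      intro i i' n n' hEq
      rcases lt_trichotomy (i : ℕ) (i' : ℕ) with h | h | h
      · exfalso
        apply havoid i i' h (n - n')
        push_cast
        linear_combination -hEq
      · have hii : i = i' := Fin.ext h
        subst hii
        exact hmn_inj n n' (add_left_cancel hEq)
      · exfalso
        apply havoid i' i h (n' - n)
        push_cast
        linear_combination hEq
    have hwinj : ∀ i i' : Fin N, wseq i = wseq i' → i = i' := by
      intro i i' hEq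
      rcases lt_trichotomy (i : ℕ) (i' : ℕ) with h | h | h
      · exfalso
        apply havoid i i' h 0
        push_cast
        linear_combination -hEq
      · exact Fin.ext h
      · exfalso
        apply havoid i' i h 0
        push_cast
        linear_combination hEq
    have hv : ∀ i : Fin N, ∃ y : A, y ∈ weightSubmodule ℓ x c (wseq i) ∧ y ≠ 0 := by
      intro i
      rcases (Submodule.ne_bot_iff _).mp (hpickP (WS i)).1 with ⟨y, hy, hy0⟩
      exact ⟨y, hy, hy0⟩
    choose v hvmem hvne using hv
    have hkind : ∀ (s : Finset (Fin N)) (a : Fin N → k),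
        (∑ i ∈ s, a i • v i) = 0 → ∀ i ∈ s, a i = 0 := by
      intro s a hsum i hi
      have hz : ∀ q : ↥s, a (q : Fin N) • v (q : Fin N) = 0 := by
        refine hL ↥s (fun q => wseq ((q : Fin N) : ℕ))
          (fun q => a (q : Fin N) • v (q : Fin N))
          (fun q => Submodule.smul_mem _ _ (hvmem _)) ?_ ?_
        · intro q q' hqq
          exact Subtype.ext (hwinj _ _ hqq)
        · rw [Finset.sum_coe_sort s (fun i => a i • v i)]
          exact hsum
      rcases smul_eq_zero.mp (hz ⟨i, hi⟩) with h | h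
      · exact h
      · exact absurd h (hvne i)
    have hRind := hRLI (Fin N) v (fun i => wseq i) hvmem hkind hcoset
    have hcle := hRind.cardinal_le_rank
    rw [← Module.finrank_eq_rank (LaurentPolynomial k) A, Cardinal.mk_fin,
      Nat.cast_le, hN] at hcle
    omega
end
end

section
/- In the setup below: (a) for every nonzero eigenvalue w of ad(x), the eigenspace Â_w is contained in Ã = A ⊕ kc; (b) the zero eigenspace decomposes as Â₀ = Ã₀ ⊕ k·x, where Ã₀ = Ã ∩ Â₀. -/
open LaurentPolynomial TensorProduct

noncomputable section

/-- (a) Every eigenspace `Â_w` of `ad(x)` with `w ≠ 0` is contained in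
`Ã = A ⊕ kc`; (b) the zero eigenspace decomposes as `Â₀ = Ã₀ ⊕ k·x`. -/
theorem eigenspace_location
    -- the base field
    (k : Type) [Field k] [IsAlgClosed k] [CharZero k]
    -- the simple finite-dimensional Lie algebra 𝔤
    (𝔤 : Type) [LieRing 𝔤] [LieAlgebra k 𝔤] [FiniteDimensional k 𝔤]
    [LieAlgebra.IsSimple k 𝔤]
    -- the order m of σ and a primitive m-th root of unity ζ
    (m : ℕ) (hm : 0 < m)
    (σ : 𝔤 ≃ₗ⁅k⁆ 𝔤) (hσ : ∀ y : 𝔤, (⇑σ)^[m] y = y)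
    (ζ : k) (hζ : IsPrimitiveRoot ζ m)
    -- the twisted loop algebra L(𝔤,σ) = ⊕_{i∈ℤ} 𝔤_ī ⊗ sⁱ, an R-Lie algebra for
    -- R = k[t^{±1}] = LaurentPolynomial k (with t = sᵐ);
    -- `u p y` represents `y ⊗ sᵖ` for `y ∈ 𝔤_p̄`, i.e. `σ y = ζ^p • y`
    (Lg : Type) [LieRing Lg] [LieAlgebra (LaurentPolynomial k) Lg]
    [LieAlgebra k Lg] [IsScalarTower k (LaurentPolynomial k) Lg]
    (u : ℤ → 𝔤 →ₗ[k] Lg)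
    (hu_bracket : ∀ (p q : ℤ) (y z : 𝔤), σ y = ζ ^ p • y → σ z = ζ ^ q • z →
      ⁅u p y, u q z⁆ = u (p + q) ⁅y, z⁆)
    (hu_t : ∀ (p : ℤ) (y : 𝔤), σ y = ζ ^ p • y →
      (T 1 : LaurentPolynomial k) • u p y = u (p + (m : ℤ)) y)
    (hu_span : ∀ l : Lg, ∃ f : ℤ →₀ 𝔤, (∀ i, σ (f i) = ζ ^ i • f i) ∧
      l = f.sum fun i yi => u i yi)
    (hu_ind : ∀ f : ℤ →₀ 𝔤, (∀ i, σ (f i) = ζ ^ i • f i) →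
      (f.sum fun i yi => u i yi) = 0 → f = 0)
    -- the twisted affine Kac–Moody algebra L̂(𝔤,σ) = L(𝔤,σ) ⊕ kc ⊕ kd
    (Lhat : Type) [LieRing Lhat] [LieAlgebra k Lhat]
    (c d : Lhat) (ι : Lg →ₗ[k] Lhat)
    (hc : ∀ z : Lhat, ⁅c, z⁆ = 0)
    (hd : ∀ (p : ℤ) (y : 𝔤), σ y = ζ ^ p • y →
      ⁅d, ι (u p y)⁆ = (p : k) • ι (u p y))
    (hbr : ∀ (p q : ℤ) (y z : 𝔤), σ y = ζ ^ p • y → σ z = ζ ^ q • z →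
      ⁅ι (u p y), ι (u q z)⁆ =
        ι (u (p + q) ⁅y, z⁆) +
          (if p + q = 0 then (p : k) * killingForm k 𝔤 y z else 0) • c)
    (hdec : ∀ z : Lhat, ∃ (l : Lg) (a b : k), z = ι l + a • c + b • d)
    (huniq : ∀ (l : Lg) (a b : k), ι l + a • c + b • d = 0 → l = 0 ∧ a = 0 ∧ b = 0)
    -- the invariant nondegenerate bilinear form (·,·) on L̂(𝔤,σ)
    (B : LinearMap.BilinForm k Lhat)
    (hBsymm : ∀ z w : Lhat, B z w = B w z)
    (hBinv : ∀ z w y : Lhat, B ⁅z, w⁆ y = B z ⁅w, y⁆)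
    (hBval : ∀ (p q : ℤ) (y z : 𝔤), σ y = ζ ^ p • y → σ z = ζ ^ q • z →
      B (ι (u p y)) (ι (u q z)) = if p + q = 0 then killingForm k 𝔤 y z else 0)
    (hBc : ∀ l : Lg, B c (ι l) = 0) (hBd : ∀ l : Lg, B d (ι l) = 0)
    (hBcc : B c c = 0) (hBdd : B d d = 0) (hBcd : B c d = 1)
    -- the R-Lie subalgebra A of L(𝔤,σ), free of finite rank over R,
    -- with A ⊗_R K semisimple over the fraction field K of R
    (A : Type) [LieRing A] [LieAlgebra (LaurentPolynomial k) A]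
    [Module k A] [IsScalarTower k (LaurentPolynomial k) A]
    [Module.Free (LaurentPolynomial k) A] [Module.Finite (LaurentPolynomial k) A]
    (hss : LieAlgebra.IsSemisimple (FractionRing (LaurentPolynomial k))
      (FractionRing (LaurentPolynomial k) ⊗[LaurentPolynomial k] A))
    (j : A →ₗ⁅LaurentPolynomial k⁆ Lg) (hj : Function.Injective j)
    -- the embedding ℓ = ι ∘ j of A into L̂(𝔤,σ)
    (ℓ : A →ₗ[k] Lhat) (hℓ : ∀ a : A, ℓ a = ι (j a))
    -- Â = A ⊕ kc ⊕ kd, a subalgebra of L̂(𝔤,σ) on which the form is nondegenerate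
    (Ahat : Submodule k Lhat)
    (hAhat : Ahat = LinearMap.range ℓ ⊔ Submodule.span k {c} ⊔ Submodule.span k {d})
    (hA_closed : ∀ z ∈ Ahat, ∀ w ∈ Ahat, ⁅z, w⁆ ∈ Ahat)
    (hBnd : ∀ z ∈ Ahat, (∀ w ∈ Ahat, B z w = 0) → z = 0)
    -- the element x = x' + d with 0 ≠ x' ∈ A, with ad(x) k-diagonalizable on Â
    (x' : A) (hx'0 : x' ≠ 0) (x : Lhat) (hx : x = ℓ x' + d)
    (hdiag : ∀ z ∈ Ahat, z ∈ ⨆ w : k,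
      Ahat ⊓ Module.End.eigenspace (LieAlgebra.ad k Lhat x) w)
    :
    (∀ w : k, w ≠ 0 → ∀ z ∈ Ahat, ⁅x, z⁆ = w • z →
      z ∈ (LinearMap.range ℓ ⊔ Submodule.span k {c} : Submodule k Lhat)) ∧
    (Ahat ⊓ LinearMap.ker (LieAlgebra.ad k Lhat x) =
      ((LinearMap.range ℓ ⊔ Submodule.span k {c}) ⊓
        LinearMap.ker (LieAlgebra.ad k Lhat x)) ⊔ Submodule.span k {x}) ∧
    (((LinearMap.range ℓ ⊔ Submodule.span k {c}) ⊓
        LinearMap.ker (LieAlgebra.ad k Lhat x)) ⊓ Submodule.span k {x} = ⊥) := by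
  classical
  -- M = ι(Lg) ⊕ kc
  set M : Submodule k Lhat := LinearMap.range ι ⊔ Submodule.span k {c} with hM
  have hcM : c ∈ M := Submodule.mem_sup_right (Submodule.mem_span_singleton_self c)
  have hιM : ∀ l : Lg, ι l ∈ M := fun l => Submodule.mem_sup_left ⟨l, rfl⟩
  have lie_sum' : ∀ (s : Finset ℤ) (g : ℤ → Lhat) (y : Lhat),
      ⁅y, ∑ i ∈ s, g i⁆ = ∑ i ∈ s, ⁅y, g i⁆ := by
    intro s g y
    induction s using Finset.cons_induction with
    | empty => simp
    | cons i s hi ih => rw [Finset.sum_cons, Finset.sum_cons, lie_add, ih]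
  have sum_lie' : ∀ (s : Finset ℤ) (g : ℤ → Lhat) (y : Lhat),
      ⁅∑ i ∈ s, g i, y⁆ = ∑ i ∈ s, ⁅g i, y⁆ := by
    intro s g y
    induction s using Finset.cons_induction with
    | empty => simp
    | cons i s hi ih => rw [Finset.sum_cons, Finset.sum_cons, add_lie, ih]
  -- Lemma 1 : ⁅d, ι l⁆ ∈ range ι
  have L1 : ∀ l : Lg, ⁅d, ι l⁆ ∈ LinearMap.range ι := by
    intro l
    obtain ⟨f, hf, rfl⟩ := hu_span l
    rw [Finsupp.sum, map_sum, lie_sum']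
    refine Submodule.sum_mem _ fun i _ => ?_
    rw [hd i (f i) (hf i)]
    exact Submodule.smul_mem _ _ ⟨u i (f i), rfl⟩
  -- Lemma 2 : ⁅ι l, ι l'⁆ ∈ M
  have L2 : ∀ l l' : Lg, ⁅ι l, ι l'⁆ ∈ M := by
    intro l l'
    obtain ⟨f, hf, rfl⟩ := hu_span l
    obtain ⟨g, hg, rfl⟩ := hu_span l'
    rw [Finsupp.sum, Finsupp.sum, map_sum, map_sum, sum_lie']
    refine Submodule.sum_mem _ fun i _ => ?_
    rw [lie_sum']
    refine Submodule.sum_mem _ fun i' _ => ?_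
    rw [hbr i i' (f i) (g i') (hf i) (hg i')]
    exact Submodule.add_mem _ (hιM _) (Submodule.smul_mem _ _ hcM)
  -- B c vanishes on M
  have L3 : ∀ v ∈ M, B c v = 0 := by
    intro v hv
    rcases Submodule.mem_sup.1 hv with ⟨p, hp, q, hq, rfl⟩
    obtain ⟨l, rfl⟩ := hp
    obtain ⟨γ, rfl⟩ := Submodule.mem_span_singleton.1 hq
    simp [hBc l, hBcc]
  -- bracket with x lands in M
  have L4 : ∀ z ∈ Ahat, ⁅x, z⁆ ∈ M := by
    intro z hz
    rw [hAhat] at hz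
    rcases Submodule.mem_sup.1 hz with ⟨p, hp, q, hq, rfl⟩
    rcases Submodule.mem_sup.1 hp with ⟨p1, hp1, p2, hp2, rfl⟩
    obtain ⟨a', rfl⟩ := hp1
    obtain ⟨α, rfl⟩ := Submodule.mem_span_singleton.1 hp2
    obtain ⟨β, rfl⟩ := Submodule.mem_span_singleton.1 hq
    have hxl : ∀ l : Lg, ⁅x, ι l⁆ ∈ M := by
      intro l
      rw [hx, add_lie, hℓ]
      exact Submodule.add_mem _ (L2 _ _) (Submodule.mem_sup_left (L1 l))
    have hxc : ⁅x, c⁆ ∈ M := by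
      rw [← lie_skew, hc, neg_zero]; exact Submodule.zero_mem _
    have hxd : ⁅x, d⁆ ∈ M := by
      rw [hx, add_lie, lie_self, add_zero, hℓ, ← lie_skew]
      exact Submodule.neg_mem _ (Submodule.mem_sup_left (L1 _))
    rw [lie_add, lie_add, lie_smul, lie_smul]
    rw [hℓ]
    exact Submodule.add_mem _ (Submodule.add_mem _ (hxl _)
      (Submodule.smul_mem _ _ hxc)) (Submodule.smul_mem _ _ hxd)
  -- decomposition of z ∈ Ahat : z = y + β • d with y ∈ N
  have Ldec : ∀ z ∈ Ahat, ∃ y ∈ (LinearMap.range ℓ ⊔ Submodule.span k {c} :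
      Submodule k Lhat), ∃ β : k, z = y + β • d := by
    intro z hz
    rw [hAhat] at hz
    rcases Submodule.mem_sup.1 hz with ⟨p, hp, q, hq, rfl⟩
    obtain ⟨β, rfl⟩ := Submodule.mem_span_singleton.1 hq
    exact ⟨p, hp, β, rfl⟩
  have hNM : (LinearMap.range ℓ ⊔ Submodule.span k {c} : Submodule k Lhat) ≤ M := by
    refine sup_le (fun v hv => ?_) le_sup_right
    obtain ⟨a', rfl⟩ := hv
    rw [hℓ]; exact hιM _
  have hNAhat : (LinearMap.range ℓ ⊔ Submodule.span k {c} : Submodule k Lhat) ≤ Ahat := by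
    rw [hAhat]; exact le_sup_left
  have hxAhat : x ∈ Ahat := by
    rw [hx, hAhat]
    exact Submodule.add_mem _ (Submodule.mem_sup_left (Submodule.mem_sup_left ⟨x', rfl⟩))
      (Submodule.mem_sup_right (Submodule.mem_span_singleton_self d))
  -- if y ∈ M and y = y' + β • d with y' ∈ M then β = 0 — via B c
  have Lbeta : ∀ β : k, (β • d ∈ M) → β = 0 := by
    intro β hβ
    have := L3 _ hβ
    rwa [map_smul, smul_eq_mul, hBcd, mul_one] at this
  refine ⟨?_, ?_, ?_⟩
  · -- part (a)
    intro w hw z hz hzw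
    obtain ⟨y, hy, β, rfl⟩ := Ldec z hz
    have hzM : y + β • d ∈ M := by
      have h1 : w • (y + β • d) ∈ M := hzw ▸ L4 _ hz
      have := Submodule.smul_mem M w⁻¹ h1
      rwa [smul_smul, inv_mul_cancel₀ hw, one_smul] at this
    have hβ : β = 0 := Lbeta β (by
      have := Submodule.sub_mem M hzM (hNM hy)
      simpa using this)
    rw [hβ, zero_smul, add_zero]
    exact hy
  · -- part (b), the sum decomposition
    apply le_antisymm
    · intro z hz
      obtain ⟨hz1, hz2⟩ := hz
      have hz2' : ⁅x, z⁆ = 0 := by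
        have : (LieAlgebra.ad k Lhat x) z = 0 := hz2
        rwa [LieAlgebra.ad_apply] at this
      obtain ⟨y, hy, β, rfl⟩ := Ldec z hz1
      have key : y + β • d - β • x ∈ (LinearMap.range ℓ ⊔ Submodule.span k {c} :
          Submodule k Lhat) := by
        rw [hx, smul_add]
        have : y + β • d - (β • ℓ x' + β • d) = y - β • ℓ x' := by abel
        rw [this]
        exact Submodule.sub_mem _ hy (Submodule.smul_mem _ _ (Submodule.mem_sup_left ⟨x', rfl⟩))
      have keyk : y + β • d - β • x ∈ LinearMap.ker (LieAlgebra.ad k Lhat x) := by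
        rw [LinearMap.mem_ker, map_sub, map_smul]
        have h1 : (LieAlgebra.ad k Lhat x) (y + β • d) = 0 := hz2
        have h2 : (LieAlgebra.ad k Lhat x) x = 0 := by
          rw [LieAlgebra.ad_apply, lie_self]
        rw [h1, h2, smul_zero, sub_zero]
      have : y + β • d = (y + β • d - β • x) + β • x := by abel
      rw [this]
      exact Submodule.add_mem _ (Submodule.mem_sup_left ⟨key, keyk⟩)
        (Submodule.mem_sup_right (Submodule.smul_mem _ _
          (Submodule.mem_span_singleton_self x)))
    · refine sup_le (fun z hz => ⟨hNAhat hz.1, hz.2⟩) ?_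
      rw [Submodule.span_singleton_le_iff_mem]
      refine ⟨hxAhat, ?_⟩
      show x ∈ LinearMap.ker (LieAlgebra.ad k Lhat x)
      rw [LinearMap.mem_ker, LieAlgebra.ad_apply, lie_self]
  · -- part (b), disjointness
    rw [eq_bot_iff]
    intro z hz
    obtain ⟨⟨hz1, _⟩, hz2⟩ := hz
    obtain ⟨γ, rfl⟩ := Submodule.mem_span_singleton.1 hz2
    have hγ : γ = 0 := by
      have hBcz : B c (γ • x) = 0 := L3 _ (hNM hz1)
      rw [map_smul, hx, map_add, hℓ, hBc, zero_add, hBcd, smul_eq_mul, mul_one] at hBcz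
      exact hBcz
    rw [hγ, zero_smul]
    exact Submodule.zero_mem _
end
end

section
/- In the setup below, if y ∈ L₀ is nonzero and the adjoint operator ad(y): L(𝔤,σ) → L(𝔤,σ) is k-diagonalizable, then ad(y): L̂(𝔤,σ) → L̂(𝔤,σ) is also k-diagonalizable (L̂(𝔤,σ) has a k-basis consisting of eigenvectors of ad(y)). -/
open LaurentPolynomial TensorProduct

noncomputable section

lemma aux_lie_sum {M ι' : Type*} [LieRing M] (z : M) (s : Finset ι') (F : ι' → M) :
    ⁅z, ∑ i ∈ s, F i⁆ = ∑ i ∈ s, ⁅z, F i⁆ := by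
  classical
  induction s using Finset.induction_on with
  | empty => simp
  | insert _ _ h ih => rw [Finset.sum_insert h, Finset.sum_insert h, lie_add, ih]

lemma aux_sum_lie {M ι' : Type*} [LieRing M] (z : M) (s : Finset ι') (F : ι' → M) :
    ⁅∑ i ∈ s, F i, z⁆ = ∑ i ∈ s, ⁅F i, z⁆ := by
  classical
  induction s using Finset.induction_on with
  | empty => simp
  | insert _ _ h ih => rw [Finset.sum_insert h, Finset.sum_insert h, add_lie, ih]


/-- If `y ∈ L₀` is nonzero and `ad(y)` is `k`-diagonalizable on
`L(𝔤,σ)`, then `ad(y)` is `k`-diagonalizable on all of `L̂(𝔤,σ)`. -/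
theorem diagonalizable_extends_to_affine
    -- the base field
    (k : Type) [Field k] [IsAlgClosed k] [CharZero k]
    -- the simple finite-dimensional Lie algebra 𝔤
    (𝔤 : Type) [LieRing 𝔤] [LieAlgebra k 𝔤] [FiniteDimensional k 𝔤]
    [LieAlgebra.IsSimple k 𝔤]
    -- the order m of σ and a primitive m-th root of unity ζ
    (m : ℕ) (hm : 0 < m)
    (σ : 𝔤 ≃ₗ⁅k⁆ 𝔤) (hσ : ∀ y : 𝔤, (⇑σ)^[m] y = y)
    (ζ : k) (hζ : IsPrimitiveRoot ζ m)
    -- the twisted loop algebra L(𝔤,σ) = ⊕_{i∈ℤ} 𝔤_ī ⊗ sⁱ, an R-Lie algebra for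
    -- R = k[t^{±1}] = LaurentPolynomial k (with t = sᵐ);
    -- `u p y` represents `y ⊗ sᵖ` for `y ∈ 𝔤_p̄`, i.e. `σ y = ζ^p • y`
    (Lg : Type) [LieRing Lg] [LieAlgebra (LaurentPolynomial k) Lg]
    [LieAlgebra k Lg] [IsScalarTower k (LaurentPolynomial k) Lg]
    (u : ℤ → 𝔤 →ₗ[k] Lg)
    (hu_bracket : ∀ (p q : ℤ) (y z : 𝔤), σ y = ζ ^ p • y → σ z = ζ ^ q • z →
      ⁅u p y, u q z⁆ = u (p + q) ⁅y, z⁆)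
    (hu_t : ∀ (p : ℤ) (y : 𝔤), σ y = ζ ^ p • y →
      (T 1 : LaurentPolynomial k) • u p y = u (p + (m : ℤ)) y)
    (hu_span : ∀ l : Lg, ∃ f : ℤ →₀ 𝔤, (∀ i, σ (f i) = ζ ^ i • f i) ∧
      l = f.sum fun i yi => u i yi)
    (hu_ind : ∀ f : ℤ →₀ 𝔤, (∀ i, σ (f i) = ζ ^ i • f i) →
      (f.sum fun i yi => u i yi) = 0 → f = 0)
    -- the twisted affine Kac–Moody algebra L̂(𝔤,σ) = L(𝔤,σ) ⊕ kc ⊕ kd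
    (Lhat : Type) [LieRing Lhat] [LieAlgebra k Lhat]
    (c d : Lhat) (ι : Lg →ₗ[k] Lhat)
    (hc : ∀ z : Lhat, ⁅c, z⁆ = 0)
    (hd : ∀ (p : ℤ) (y : 𝔤), σ y = ζ ^ p • y →
      ⁅d, ι (u p y)⁆ = (p : k) • ι (u p y))
    (hbr : ∀ (p q : ℤ) (y z : 𝔤), σ y = ζ ^ p • y → σ z = ζ ^ q • z →
      ⁅ι (u p y), ι (u q z)⁆ =
        ι (u (p + q) ⁅y, z⁆) +
          (if p + q = 0 then (p : k) * killingForm k 𝔤 y z else 0) • c)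
    (hdec : ∀ z : Lhat, ∃ (l : Lg) (a b : k), z = ι l + a • c + b • d)
    (huniq : ∀ (l : Lg) (a b : k), ι l + a • c + b • d = 0 → l = 0 ∧ a = 0 ∧ b = 0)
    -- the invariant nondegenerate bilinear form (·,·) on L̂(𝔤,σ)
    (B : LinearMap.BilinForm k Lhat)
    (hBsymm : ∀ z w : Lhat, B z w = B w z)
    (hBinv : ∀ z w y : Lhat, B ⁅z, w⁆ y = B z ⁅w, y⁆)
    (hBval : ∀ (p q : ℤ) (y z : 𝔤), σ y = ζ ^ p • y → σ z = ζ ^ q • z →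
      B (ι (u p y)) (ι (u q z)) = if p + q = 0 then killingForm k 𝔤 y z else 0)
    (hBc : ∀ l : Lg, B c (ι l) = 0) (hBd : ∀ l : Lg, B d (ι l) = 0)
    (hBcc : B c c = 0) (hBdd : B d d = 0) (hBcd : B c d = 1)
    -- the element x = x' + d with ad(x) k-diagonalizable on L̂(𝔤,σ)
    (x' : Lg) (x : Lhat) (hx : x = ι x' + d)
    (hxdiag : (⨆ w : k, Module.End.eigenspace (LieAlgebra.ad k Lhat x) w) = ⊤)
    -- a nonzero element y of L₀ whose adjoint operator is diagonalizable on L(𝔤,σ)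
    (y : Lg) (hy0 : y ≠ 0)
    (hyL0 : ∃ μ : k, ⁅x, ι y⁆ = μ • c)
    (hydiag : (⨆ w : k, Module.End.eigenspace (LieAlgebra.ad k Lg y) w) = ⊤) :
    (⨆ w : k, Module.End.eigenspace (LieAlgebra.ad k Lhat (ι y)) w) = ⊤ := by
  classical
  obtain ⟨μ, hμ⟩ := hyL0
  -- Key lemma A: the bracket of images differs from the image of the bracket by a multiple of c
  have key : ∀ a b : Lg, ∃ γ : k, ⁅ι a, ι b⁆ = ι ⁅a, b⁆ + γ • c := by
    intro a b
    obtain ⟨f, hf, ha⟩ := hu_span a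
    obtain ⟨g, hg, hb⟩ := hu_span b
    have hstep : ∀ i j : ℤ,
        ⁅ι (u i (f i)), ι (u j (g j))⁆ - ι ⁅u i (f i), u j (g j)⁆ ∈ Submodule.span k {c} := by
      intro i j
      rw [hu_bracket i j _ _ (hf i) (hg j), hbr i j _ _ (hf i) (hg j)]
      rw [add_sub_cancel_left]
      exact Submodule.smul_mem _ _ (Submodule.mem_span_singleton_self c)
    have expand : ⁅ι a, ι b⁆ - ι ⁅a, b⁆ =
        ∑ i ∈ f.support, ∑ j ∈ g.support,
          (⁅ι (u i (f i)), ι (u j (g j))⁆ - ι ⁅u i (f i), u j (g j)⁆) := by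
      rw [ha, hb, Finsupp.sum, Finsupp.sum]
      simp only [map_sum, aux_sum_lie, aux_lie_sum, Finset.sum_sub_distrib]
      congr 1 <;> exact Finset.sum_comm
    have h1 : ⁅ι a, ι b⁆ - ι ⁅a, b⁆ ∈ Submodule.span k {c} := by
      rw [expand]
      exact Submodule.sum_mem _ fun i _ => Submodule.sum_mem _ fun j _ => hstep i j
    rw [Submodule.mem_span_singleton] at h1
    obtain ⟨γ, hγ⟩ := h1
    exact ⟨γ, by rw [hγ]; abel⟩
  -- Key lemma B: the bracket with d stays in the image of ι
  have keyd : ∀ a : Lg, ∃ a' : Lg, ⁅d, ι a⁆ = ι a' := by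
    intro a
    obtain ⟨f, hf, ha⟩ := hu_span a
    refine ⟨∑ i ∈ f.support, (i : k) • u i (f i), ?_⟩
    rw [ha, Finsupp.sum, map_sum, aux_lie_sum, map_sum]
    exact Finset.sum_congr rfl fun i _ => by rw [hd i _ (hf i), map_smul]
  obtain ⟨y₁, hy₁⟩ := keyd y
  obtain ⟨γ₀, hγ₀⟩ := key x' y
  -- y ∈ L₀ : identify y₁
  have hy₁eq : y₁ = -⁅x', y⁆ := by
    have hxy : ι (⁅x', y⁆ + y₁) + (γ₀ - μ) • c + (0 : k) • d = 0 := by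
      have h2 : ι ⁅x', y⁆ + γ₀ • c + ι y₁ = μ • c := by
        rw [← hγ₀, ← hy₁, ← add_lie, ← hx, hμ]
      rw [zero_smul, add_zero, map_add, sub_smul]
      calc ι ⁅x', y⁆ + ι y₁ + (γ₀ • c - μ • c)
          = (ι ⁅x', y⁆ + γ₀ • c + ι y₁) - μ • c := by abel
        _ = 0 := by rw [h2, sub_self]
    obtain ⟨h3, -, -⟩ := huniq _ _ _ hxy
    exact eq_neg_of_add_eq_zero_right h3
  have hιxy : ι ⁅x', y⁆ = ⁅ι x', ι y⁆ - γ₀ • c := by rw [hγ₀]; abel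
  have hBιxc : B (ι x') c = 0 := by rw [hBsymm]; exact hBc x'
  -- μ = 0
  have hμ0 : μ = 0 := by
    have h1 : B ⁅x, ι y⁆ d = μ := by
      rw [hμ, map_smul, LinearMap.smul_apply, hBcd, smul_eq_mul, mul_one]
    have hlyd : ⁅ι y, d⁆ = ι ⁅x', y⁆ := by
      rw [← lie_skew, hy₁, hy₁eq, map_neg, neg_neg]
    have h2 : B ⁅x, ι y⁆ d = 0 := by
      rw [hBinv, hlyd, hx, map_add, LinearMap.add_apply, hBd, add_zero, hιxy, map_sub,
        map_smul, hBιxc, smul_zero, sub_zero,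
        ← hBinv, lie_self, map_zero, LinearMap.zero_apply]
    rw [h2] at h1
    exact h1.symm
  -- the correction map and eigenvector computation
  have evec : ∀ (w : k) (l : Lg), ⁅y, l⁆ = w • l →
      ⁅ι y, ι l - (B (ι x') (ι l)) • c⁆ = w • (ι l - (B (ι x') (ι l)) • c) := by
    intro w l hl
    obtain ⟨γ, hγ⟩ := key y l
    rw [hl, map_smul] at hγ
    have hγval : γ = -(w * B (ι x') (ι l)) := by
      have e1 : B ⁅ι y, ι l⁆ d = γ := by
        rw [hγ, map_add, LinearMap.add_apply, map_smul, map_smul, LinearMap.smul_apply,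
          LinearMap.smul_apply, hBcd, hBsymm (ι l) d, hBd, smul_zero, zero_add,
          smul_eq_mul, mul_one]
      have h3 : B ⁅ι x', ι y⁆ (ι l) = w * B (ι x') (ι l) := by
        rw [hBinv, hγ, map_add, map_smul, map_smul, hBιxc, smul_zero, add_zero,
          smul_eq_mul]
      have e2 : B ⁅ι y, ι l⁆ d = -(w * B (ι x') (ι l)) := by
        rw [hBsymm, ← hBinv, hy₁, hy₁eq, map_neg, map_neg, LinearMap.neg_apply, hιxy,
          map_sub, LinearMap.sub_apply, map_smul, LinearMap.smul_apply, hBc, smul_zero,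
          sub_zero, h3]
      exact e1.symm.trans e2
    have hyc : ⁅ι y, c⁆ = 0 := by rw [← lie_skew, hc, neg_zero]
    rw [lie_sub, lie_smul, hyc, smul_zero, sub_zero, hγ, hγval, smul_sub, smul_smul]
    rw [neg_smul, ← sub_eq_add_neg]
  -- assemble membership facts
  set A := LieAlgebra.ad k Lhat (ι y) with hA
  set E := ⨆ w : k, Module.End.eigenspace A w with hE
  have hcE : c ∈ E := by
    have : c ∈ Module.End.eigenspace A 0 := by
      rw [Module.End.mem_eigenspace_iff, zero_smul, hA, LieAlgebra.ad_apply, ← lie_skew,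
        hc, neg_zero]
    exact (le_iSup (fun w : k => Module.End.eigenspace A w) 0) this
  have hxE : x ∈ E := by
    have : x ∈ Module.End.eigenspace A 0 := by
      rw [Module.End.mem_eigenspace_iff, zero_smul, hA, LieAlgebra.ad_apply, ← lie_skew,
        hμ, hμ0, zero_smul, neg_zero]
    exact (le_iSup (fun w : k => Module.End.eigenspace A w) 0) this
  have hιE : ∀ l : Lg, ι l ∈ E := by
    set φ : Lg →ₗ[k] Lhat := ι - LinearMap.smulRight ((B (ι x')) ∘ₗ ι) c with hφdef
    have hφ : ∀ w : k, Module.End.eigenspace (LieAlgebra.ad k Lg y) w ≤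
        (Module.End.eigenspace A w).comap φ := by
      intro w l hl
      rw [Module.End.mem_eigenspace_iff, LieAlgebra.ad_apply] at hl
      rw [Submodule.mem_comap, Module.End.mem_eigenspace_iff]
      have hφl : φ l = ι l - (B (ι x') (ι l)) • c := by
        simp [hφdef, LinearMap.smulRight_apply]
      rw [hφl, hA, LieAlgebra.ad_apply]
      exact evec w l hl
    have htop : (⊤ : Submodule k Lg) ≤ E.comap φ := by
      rw [← hydiag]
      exact iSup_le fun w => le_trans (hφ w)
        (Submodule.comap_mono (le_iSup (fun w : k => Module.End.eigenspace A w) w))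
    intro l
    have hφl : φ l ∈ E := htop (Submodule.mem_top (x := l))
    have : ι l = φ l + (B (ι x') (ι l)) • c := by
      simp [hφdef, LinearMap.smulRight_apply]
    rw [this]
    exact E.add_mem hφl (E.smul_mem _ hcE)
  -- conclude
  rw [eq_top_iff]
  intro z _
  obtain ⟨l, a, b, hz⟩ := hdec z
  have hd' : d = x - ι x' := by rw [hx]; abel
  rw [hz, hd', smul_sub]
  exact E.add_mem (E.add_mem (hιE l) (E.smul_mem a hcE))
    (E.sub_mem (E.smul_mem b hxE) (E.smul_mem b (hιE x')))
end
end

section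
/- The kernel of the restriction homomorphism τ: Aut_{k-Lie}(L̂(𝔤)_S) → Aut_{k-Lie}(L̃(𝔤)_S) is isomorphic to the additive group Hom_k(kd, kc) ≅ (k,+). Explicitly, a k-Lie automorphism ψ of L̂(𝔤)_S restricts to the identity on L̃(𝔤)_S if and only if there exists a ∈ k such that ψ(x̃ + b·d) = x̃ + ab·c + b·d for all x̃ ∈ L̃(𝔤)_S and b ∈ k. -/
open LaurentPolynomial TensorProduct

noncomputable section

/-- The kernel of
`τ : Aut_{k-Lie}(L̂(𝔤)_S) → Aut_{k-Lie}(L̃(𝔤)_S)` is `Hom_k(kd, kc) ≅ (k,+)`: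
an automorphism `ψ` of `L̂(𝔤)_S` restricts to the identity on `L̃(𝔤)_S` iff
`ψ(x̃ + b•d) = x̃ + a*b•c + b•d` for some fixed `a ∈ k`. -/
theorem kernel_of_restriction
    -- the base field
    (k : Type) [Field k] [IsAlgClosed k] [CharZero k]
    -- the simple finite-dimensional Lie algebra 𝔤
    (𝔤 : Type) [LieRing 𝔤] [LieAlgebra k 𝔤] [FiniteDimensional k 𝔤]
    [LieAlgebra.IsSimple k 𝔤]
    -- the loop algebra L(𝔤)_S = 𝔤 ⊗_k S, S = k[s^{±1}]; `u p y` represents `y ⊗ sᵖ`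
    (Lg : Type) [LieRing Lg] [LieAlgebra k Lg]
    (u : ℤ → 𝔤 →ₗ[k] Lg)
    (hu_bracket : ∀ (p q : ℤ) (y z : 𝔤), ⁅u p y, u q z⁆ = u (p + q) ⁅y, z⁆)
    (hu_span : ∀ l : Lg, ∃ f : ℤ →₀ 𝔤, l = f.sum fun i yi => u i yi)
    (hu_ind : ∀ f : ℤ →₀ 𝔤, (f.sum fun i yi => u i yi) = 0 → f = 0)
    -- the split affine Kac–Moody algebra L̂(𝔤)_S = L(𝔤)_S ⊕ kc ⊕ kd
    (Lhat : Type) [LieRing Lhat] [LieAlgebra k Lhat]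
    (c d : Lhat) (ι : Lg →ₗ[k] Lhat)
    (hc : ∀ z : Lhat, ⁅c, z⁆ = 0)
    (hd : ∀ (p : ℤ) (y : 𝔤), ⁅d, ι (u p y)⁆ = (p : k) • ι (u p y))
    (hbr : ∀ (p q : ℤ) (y z : 𝔤),
      ⁅ι (u p y), ι (u q z)⁆ =
        ι (u (p + q) ⁅y, z⁆) +
          (if p + q = 0 then (p : k) * killingForm k 𝔤 y z else 0) • c)
    (hdec : ∀ z : Lhat, ∃ (l : Lg) (a b : k), z = ι l + a • c + b • d)
    (huniq : ∀ (l : Lg) (a b : k), ι l + a • c + b • d = 0 → l = 0 ∧ a = 0 ∧ b = 0)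
    :
    ∀ φ : Lhat ≃ₗ⁅k⁆ Lhat,
      (∀ z ∈ (LinearMap.range ι ⊔ Submodule.span k {c} : Submodule k Lhat),
        φ z = z) ↔
      (∃ a : k,
        ∀ z ∈ (LinearMap.range ι ⊔ Submodule.span k {c} : Submodule k Lhat),
          ∀ b : k, φ (z + b • d) = z + (a * b) • c + b • d) := by
  intro φ
  constructor
  · intro h
    -- decompose φ d
    obtain ⟨l, a, b, hφd⟩ := hdec (φ d)
    obtain ⟨f, hf⟩ := hu_span l
    -- φ fixes every ι (u p y)
    have hfix : ∀ (p : ℤ) (y : 𝔤), φ (ι (u p y)) = ι (u p y) := fun p y =>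
      h _ (Submodule.mem_sup_left ⟨u p y, rfl⟩)
    have φlie : ∀ x y : Lhat, φ ⁅x, y⁆ = ⁅φ x, φ y⁆ := fun x y => by
      have := LieHom.map_lie (φ : Lhat →ₗ⁅k⁆ Lhat) x y
      rwa [LieEquiv.coe_toLieHom] at this
    have φsmul : ∀ (r : k) (x : Lhat), φ (r • x) = r • φ x := fun r x => by
      have := map_smul (φ : Lhat →ₗ⁅k⁆ Lhat) r x
      rwa [LieEquiv.coe_toLieHom] at this
    have φadd : ∀ x y : Lhat, φ (x + y) = φ x + φ y := fun x y =>
      φ.toLinearEquiv.map_add x y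
    -- the key computation
    have key : ∀ (p : ℤ) (y : 𝔤) (j : ℤ),
        ⁅f j, y⁆ = if j = 0 then ((1 - b) * (p : k)) • y else 0 := by
      intro p y j
      -- step 1 : ⁅ι l, ι (u p y)⁆ = ((1-b)p) • ι (u p y)
      have e1 : ((p : k)) • ι (u p y) = ⁅ι l + a • c + b • d, ι (u p y)⁆ := by
        have h1 : φ ⁅d, ι (u p y)⁆ = ⁅φ d, φ (ι (u p y))⁆ := φlie _ _
        rw [hd, φsmul, hfix, hφd] at h1
        exact h1
      have step1 : ⁅ι l, ι (u p y)⁆ = ((1 - b) * (p : k)) • ι (u p y) := by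
        rw [add_lie, add_lie, smul_lie, smul_lie, hc, hd, smul_smul, smul_zero,
          add_zero] at e1
        have h2 : ⁅ι l, ι (u p y)⁆
            = ((p : k)) • ι (u p y) - (b * (p : k)) • ι (u p y) :=
          eq_sub_of_add_eq e1.symm
        rw [h2, ← sub_smul]
        congr 1
        ring
      -- step 2 : expand ⁅ι l, ι (u p y)⁆ along f
      set L1 : Lg := f.sum (fun i x => u (i + p) ⁅x, y⁆) with hL1
      set α : k := f.sum (fun i x =>
        if i + p = 0 then (i : k) * killingForm k 𝔤 x y else 0) with hα
      have step2 : ⁅ι l, ι (u p y)⁆ = ι L1 + α • c := by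
        have hB : ∀ (s : Finset ℤ) (g : ℤ → Lhat),
            ⁅∑ i ∈ s, g i, ι (u p y)⁆ = ∑ i ∈ s, ⁅g i, ι (u p y)⁆ := by
          intro s g
          induction s using Finset.cons_induction with
          | empty => simp
          | cons i s his ih => rw [Finset.sum_cons, Finset.sum_cons, add_lie, ih]
        rw [hf, map_finsuppSum, Finsupp.sum, hB]
        have : ∀ i ∈ f.support,
            ⁅ι (u i (f i)), ι (u p y)⁆ =
              ι (u (i + p) ⁅f i, y⁆) +
                (if i + p = 0 then (i : k) * killingForm k 𝔤 (f i) y else 0) • c := by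
          intro i _; exact hbr i p (f i) y
        rw [Finset.sum_congr rfl this, Finset.sum_add_distrib, ← map_sum,
          ← Finset.sum_smul]
        rfl
      -- step 3 : identify coefficients
      have step3 : L1 = ((1 - b) * (p : k)) • u p y := by
        have h0 : ι (L1 - ((1 - b) * (p : k)) • u p y) + α • c + (0 : k) • d = 0 := by
          rw [map_sub, zero_smul, add_zero, map_smul]
          rw [step2] at step1
          rw [← step1]; abel
        exact sub_eq_zero.mp (huniq _ _ _ h0).1
      -- step 4 : turn this into a Finsupp identity
      set g : ℤ →₀ 𝔤 :=
        Finsupp.mapDomain (· + p) (f.mapRange (fun x => ⁅x, y⁆) (zero_lie y))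
          - Finsupp.single p (((1 - b) * (p : k)) • y) with hg
      have hgsum : (g.sum fun i yi => u i yi) = 0 := by
        rw [hg, Finsupp.sum_sub_index (fun i b₁ b₂ => map_sub (u i) b₁ b₂),
          Finsupp.sum_mapDomain_index (fun i => map_zero (u i))
            (fun i b₁ b₂ => map_add (u i) b₁ b₂),
          Finsupp.sum_mapRange_index (fun i => map_zero (u (i + p))),
          Finsupp.sum_single_index (h := fun i yi => (u i) yi) (map_zero (u p)),
          map_smul]
        rw [← hL1] at *
        rw [step3, sub_self]
      have hg0 : g = 0 := hu_ind g hgsum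
      have := DFunLike.congr_fun hg0 (j + p)
      rw [hg, Finsupp.sub_apply,
        Finsupp.mapDomain_apply (fun a b hab => by omega) _ j,
        Finsupp.mapRange_apply, Finsupp.single_apply] at this
      simp only [Finsupp.coe_zero, Pi.zero_apply] at this
      have hcond : (p = j + p) ↔ (j = 0) := by omega
      by_cases hj : j = 0
      · rw [if_pos (hcond.mpr hj)] at this
        rw [if_pos hj]
        exact sub_eq_zero.mp this
      · rw [if_neg (fun hh => hj (hcond.mp hh))] at this
        rw [if_neg hj]
        exact sub_eq_zero.mp this
    -- deduce b = 1
    have hnt : Nontrivial 𝔤 := by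
      rcases subsingleton_or_nontrivial 𝔤 with hs | hn
      · exact absurd (⟨fun x y => Subsingleton.elim _ _⟩ : IsLieAbelian 𝔤)
          (LieAlgebra.IsSimple.non_abelian k)
      · exact hn
    obtain ⟨y, hy⟩ := exists_ne (0 : 𝔤)
    have hb1 : b = 1 := by
      have e : ((1 - b) * ((1 : ℤ) : k)) • y = ((1 - b) * ((2 : ℤ) : k)) • y := by
        have k1 := key 1 y 0
        have k2 := key 2 y 0
        rw [if_pos rfl] at k1 k2
        rw [← k1, ← k2]
      have e2 : ((1 - b) * ((1 : ℤ) : k) - (1 - b) * ((2 : ℤ) : k)) • y = 0 := by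
        rw [sub_smul, e, sub_self]
      rcases smul_eq_zero.mp e2 with h' | h'
      · have hb : (1 : k) - b = 0 := by
          push_cast at h'
          linear_combination -h'
        exact ((sub_eq_zero.mp hb).symm)
      · exact absurd h' hy
    -- deduce l = 0
    have hl0 : l = 0 := by
      have hfj : ∀ j, f j = 0 := by
        intro j
        have hz : ∀ z : 𝔤, ⁅f j, z⁆ = 0 := by
          intro z
          have := key 1 z j
          rw [hb1] at this
          simpa using this
        have hmem : f j ∈ LieAlgebra.center k 𝔤 := fun z => by
          rw [← lie_skew, hz z, neg_zero]
        rw [LieAlgebra.center_eq_bot] at hmem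
        exact hmem
      have : f = 0 := Finsupp.ext hfj
      rw [hf, this, Finsupp.sum_zero_index]
    rw [hl0, map_zero, zero_add, hb1, one_smul] at hφd
    -- conclude
    refine ⟨a, fun z hz b' => ?_⟩
    rw [φadd, h z hz, φsmul, hφd, smul_add, smul_smul, mul_comm b' a]
    abel
  · rintro ⟨a, ha⟩ z hz
    have := ha z hz 0
    simpa using this
end
end
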